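/- arXiv:2210.06143 — 5 statements merged into one kernel-verified Lean document; each statement's English description precedes it below -/
import Mathlib

section
/- (Herbst theorem) Suppose F is a random variable such that for all λ > 0, Ent[e^{λF}] ≤ (λ²σ²/2) E[e^{λF}]. Then for all λ > 0, (1/λ) log E[e^{λF}] ≤ E[F] + λσ²/2. -/
open MeasureTheory Real

open Filter Topology Set

lemma aux0 {c u : ℝ} (hc : 0 < c) (hu : 0 ≤ u) : u * (c * Real.exp 1) ≤ Real.exp (c * u) := by
  have h := Real.add_one_le_exp (c * u - 1)
  have h2 : Real.exp (c * u - 1) * Real.exp 1 = Real.exp (c * u) := by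
    rw [← Real.exp_add]; ring_nf
  nlinarith [Real.exp_pos (c * u - 1), Real.exp_pos 1, Real.exp_pos (c*u)]

lemma aux1 {t x y : ℝ} (ht : 0 < t) (hx1 : t/2 ≤ x) (hx2 : x ≤ 3*t/2) :
    |y| * Real.exp (x * y) ≤ 2/(t * Real.exp 1) * (Real.exp (2*t*y) + 1) := by
  have he : (0:ℝ) < t * Real.exp 1 := by positivity
  rcases le_or_gt 0 y with hy | hy
  · rw [abs_of_nonneg hy]
    have h1 : Real.exp (x * y) ≤ Real.exp (3*t/2 * y) := by
      apply Real.exp_le_exp.2; nlinarith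
    have h2 := aux0 (c := t/2) (u := y) (by linarith) hy
    have h3 : Real.exp (t/2 * y) * Real.exp (3*t/2*y) = Real.exp (2*t*y) := by
      rw [← Real.exp_add]; ring_nf
    have hx3 : 0 < Real.exp (x*y) := Real.exp_pos _
    -- y ≤ exp(t/2*y)/(t/2*e)
    have h4 : y * Real.exp (x*y) ≤ 2/(t*Real.exp 1) * Real.exp (2*t*y) := by
      rw [div_mul_eq_mul_div, le_div_iff₀ he]
      calc y * Real.exp (x*y) * (t * Real.exp 1)
          ≤ y * Real.exp (3*t/2*y) * (t * Real.exp 1) := by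
            nlinarith [mul_le_mul_of_nonneg_left h1 hy]
        _ ≤ 2 * Real.exp (2*t*y) := by
            nlinarith [Real.exp_pos (3*t/2*y), mul_le_mul_of_nonneg_right h2 (Real.exp_pos (3*t/2*y)).le]
    nlinarith [Real.exp_pos (2*t*y)]
  · rw [abs_of_neg hy]
    have h1 : Real.exp (x * y) ≤ Real.exp (t/2 * y) := by
      apply Real.exp_le_exp.2; nlinarith
    have h2 := aux0 (c := t/2) (u := -y) (by linarith) (by linarith)
    -- -y * exp(t/2 * y) ≤ 2/(t e)
    have h3 : Real.exp (t/2 * y) * Real.exp (t/2 * (-y)) = 1 := by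
      rw [← Real.exp_add]; ring_nf; exact Real.exp_zero
    have h4 : (-y) * Real.exp (x*y) ≤ 2/(t*Real.exp 1) := by
      rw [le_div_iff₀ he]
      calc (-y) * Real.exp (x*y) * (t * Real.exp 1)
          ≤ (-y) * Real.exp (t/2*y) * (t*Real.exp 1) := by
            nlinarith [mul_le_mul_of_nonneg_left h1 (by linarith : (0:ℝ) ≤ -y)]
        _ ≤ 2 := by
            have := mul_le_mul_of_nonneg_right h2 (Real.exp_pos (t/2*y)).le
            rw [mul_comm (t/2) (-y)] at this
            nlinarith [Real.exp_pos (t/2*y)]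
    have hd : (0:ℝ) < 2/(t*Real.exp 1) := by positivity
    nlinarith [Real.exp_pos (2*t*y)]

lemma auxDeriv {Ω : Type*} [MeasurableSpace Ω] (μ : Measure Ω) [IsProbabilityMeasure μ]
    (F : Ω → ℝ) (hF : Integrable F μ)
    (hmgf : ∀ l : ℝ, 0 < l → Integrable (fun ω => Real.exp (l * F ω)) μ)
    (t : ℝ) (ht : 0 < t) :
    Integrable (fun ω => F ω * Real.exp (t * F ω)) μ ∧
    HasDerivAt (fun x => ∫ ω, Real.exp (x * F ω) ∂μ) (∫ ω, F ω * Real.exp (t * F ω) ∂μ) t := by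
  have h := hasDerivAt_integral_of_dominated_loc_of_deriv_le
    (F := fun (x : ℝ) ω => Real.exp (x * F ω))
    (F' := fun (x : ℝ) ω => F ω * Real.exp (x * F ω))
    (x₀ := t) (s := Metric.ball t (t/2))
    (bound := fun ω => 2/(t*Real.exp 1) * (Real.exp (2*t*F ω) + 1))
    (μ := μ) (Metric.ball_mem_nhds t (by positivity))
    (by filter_upwards [Ioi_mem_nhds ht] with x hx
        exact (hmgf x hx).aestronglyMeasurable)
    (hmgf t ht)
    (hF.aestronglyMeasurable.mul (hmgf t ht).aestronglyMeasurable)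
    (by filter_upwards with ω
        intro x hx
        rw [Metric.mem_ball, Real.dist_eq, abs_lt] at hx
        rw [Real.norm_eq_abs, abs_mul, abs_of_pos (Real.exp_pos _)]
        exact aux1 ht (by linarith [hx.1]) (by linarith [hx.2]))
    (by exact ((hmgf (2*t) (by positivity)).add (integrable_const 1)).const_mul _)
    (by filter_upwards with ω
        intro x hx
        have h := (hasDerivAt_mul_const (F ω) (x := x)).exp
        simpa [mul_comm] using h)
  exact h

/-- Herbst theorem: if Ent[e^{λF}] ≤ (λ²σ²/2) E[e^{λF}] for all λ > 0,
then (1/λ) log E[e^{λF}] ≤ E[F] + λσ²/2 for all λ > 0. -/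
theorem herbst {Ω : Type*} [MeasurableSpace Ω]
    (μ : Measure Ω) [IsProbabilityMeasure μ] (F : Ω → ℝ) (σ : ℝ) (hσ : 0 < σ)
    (hF : Integrable F μ)
    (hmgf : ∀ l : ℝ, 0 < l → Integrable (fun ω => Real.exp (l * F ω)) μ)
    (hmgf2 : ∀ l : ℝ, 0 < l →
      Integrable (fun ω => Real.exp (l * F ω) * Real.log (Real.exp (l * F ω))) μ)
    (hEnt : ∀ l : ℝ, 0 < l →
      (∫ ω, Real.exp (l * F ω) * Real.log (Real.exp (l * F ω)) ∂μ)
          - (∫ ω, Real.exp (l * F ω) ∂μ) * Real.log (∫ ω, Real.exp (l * F ω) ∂μ)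
        ≤ l ^ 2 * σ ^ 2 / 2 * ∫ ω, Real.exp (l * F ω) ∂μ) :
    ∀ l : ℝ, 0 < l →
      (1 / l) * Real.log (∫ ω, Real.exp (l * F ω) ∂μ)
        ≤ (∫ ω, F ω ∂μ) + l * σ ^ 2 / 2 := by
  intro l hl
  set M : ℝ → ℝ := fun t => ∫ ω, Real.exp (t * F ω) ∂μ with hMdef
  have hMpos : ∀ t : ℝ, 0 < t → 0 < M t := by
    intro t ht
    have := ProbabilityTheory.mgf_pos (X := F) (μ := μ) (t := t) (hmgf t ht)
    simpa [ProbabilityTheory.mgf] using this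
  -- derivative of Φ
  have hΦderiv : ∀ t : ℝ, 0 < t →
      ∃ d, HasDerivAt (fun x => σ^2/2*x - Real.log (M x)/x) d t ∧ 0 ≤ d := by
    intro t ht
    obtain ⟨hint, hD⟩ := auxDeriv μ F hF hmgf t ht
    set D := ∫ ω, F ω * Real.exp (t * F ω) ∂μ with hDdef
    have hm := hMpos t ht
    have h1 : HasDerivAt (fun x => Real.log (M x)) (D / M t) t := hD.log hm.ne'
    have h2 : HasDerivAt (fun x => Real.log (M x) / x)
        ((D / M t * t - Real.log (M t) * 1) / t^2) t :=
      h1.div (hasDerivAt_id t) ht.ne'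
    have h3 : HasDerivAt (fun x => σ^2/2*x - Real.log (M x)/x)
        (σ^2/2 * 1 - (D / M t * t - Real.log (M t) * 1) / t^2) t :=
      ((hasDerivAt_id t).const_mul (σ^2/2)).sub h2
    refine ⟨_, h3, ?_⟩
    have hkey := hEnt t ht
    have heq : (∫ ω, Real.exp (t * F ω) * Real.log (Real.exp (t * F ω)) ∂μ) = t * D := by
      simp_rw [Real.log_exp]
      have hptw : ∀ ω, Real.exp (t * F ω) * (t * F ω) = t * (F ω * Real.exp (t * F ω)) := by
        intro ω; ring
      simp_rw [hptw]
      rw [MeasureTheory.integral_const_mul]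
    rw [heq] at hkey
    have hkey' : t * D - M t * Real.log (M t) ≤ t^2 * σ^2/2 * M t := hkey
    rw [sub_nonneg, mul_one, div_le_iff₀ (by positivity)]
    have hd : D / M t * t * M t = t * D := by field_simp
    nlinarith [hm, hkey', hd]
  have hmono : MonotoneOn (fun x => σ^2/2*x - Real.log (M x)/x) (Ioi (0:ℝ)) := by
    have hio : interior (Ioi (0:ℝ)) = Ioi 0 := isOpen_Ioi.interior_eq
    apply monotoneOn_of_deriv_nonneg (convex_Ioi 0)
    · intro x hx
      obtain ⟨d, hd, _⟩ := hΦderiv x hx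
      exact hd.continuousAt.continuousWithinAt
    · rw [hio]; intro x hx
      obtain ⟨d, hd, _⟩ := hΦderiv x hx
      exact hd.differentiableAt.differentiableWithinAt
    · rw [hio]; intro x hx
      obtain ⟨d, hd, hd0⟩ := hΦderiv x hx
      rw [hd.deriv]; exact hd0
  have hstep : ∀ a : ℝ, a ∈ Ioo 0 l → Real.log (M l)/l - σ^2/2*l ≤ (M a - 1)/a := by
    intro a ha
    have h1 := hmono (mem_Ioi.2 ha.1) (mem_Ioi.2 hl) ha.2.le
    have h2 : Real.log (M a) ≤ M a - 1 := Real.log_le_sub_one_of_pos (hMpos a ha.1)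
    have h3 : Real.log (M a)/a ≤ (M a - 1)/a := by
      rw [div_eq_mul_inv, div_eq_mul_inv]
      exact mul_le_mul_of_nonneg_right h2 (inv_nonneg.2 ha.1.le)
    have hσa : (0:ℝ) ≤ σ^2/2 * a := mul_nonneg (by positivity) ha.1.le
    simp only at h1
    linarith
  -- limit as a → 0+
  have hslope : ∀ᵐ ω ∂μ, Tendsto (fun a => (Real.exp (a * F ω) - 1)/a)
      (𝓝[>] (0:ℝ)) (𝓝 (F ω)) := by
    filter_upwards with ω
    have h := (hasDerivAt_mul_const (F ω) (x := (0:ℝ))).exp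
    rw [hasDerivAt_iff_tendsto_slope] at h
    have h2 : Tendsto (slope (fun a => Real.exp (a * F ω)) 0) (𝓝[>] (0:ℝ))
        (𝓝 (Real.exp (0 * F ω) * F ω)) :=
      h.mono_left (nhdsWithin_mono _ (fun x hx => ne_of_gt hx))
    simp only [zero_mul, Real.exp_zero, one_mul] at h2
    apply h2.congr'
    filter_upwards [self_mem_nhdsWithin] with a (ha : a ∈ Ioi 0)
    simp [slope, zero_mul, Real.exp_zero, div_eq_inv_mul]
  have hDCT : Tendsto (fun a => ∫ ω, (Real.exp (a * F ω) - 1)/a ∂μ)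
      (𝓝[>] (0:ℝ)) (𝓝 (∫ ω, F ω ∂μ)) := by
    apply tendsto_integral_filter_of_dominated_convergence
      (bound := fun ω => |F ω| + (Real.exp (l * F ω) + 1)/l)
    · filter_upwards [self_mem_nhdsWithin] with a (ha : a ∈ Ioi 0)
      exact (((hmgf a ha).sub (integrable_const 1)).div_const a).aestronglyMeasurable
    · filter_upwards [Ioo_mem_nhdsGT_of_mem ⟨le_refl (0:ℝ), hl⟩] with a ha
      filter_upwards with ω
      set y := F ω with hy
      have hlow : y ≤ (Real.exp (a*y) - 1)/a := by
        rw [le_div_iff₀ ha.1]; nlinarith [Real.add_one_le_exp (a*y)]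
      have hfrac : a/l * l = a := div_mul_cancel₀ a hl.ne'
      have hw1 : (0:ℝ) ≤ a/l := div_nonneg ha.1.le hl.le
      have hw2 : (0:ℝ) ≤ 1 - a/l := by
        have : a/l < 1 := (div_lt_one hl).2 ha.2
        linarith
      have hw3 : a/l + (1 - a/l) = 1 := by ring
      have hcx := convexOn_exp.2 (mem_univ (l*y)) (mem_univ (0:ℝ)) hw1 hw2 hw3
      simp only [smul_eq_mul, mul_zero, add_zero, Real.exp_zero, mul_one] at hcx
      have hcx2 : Real.exp (a*y) ≤ a/l * Real.exp (l*y) + (1 - a/l) := by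
        have hab : a/l * (l*y) = a * y := by
          field_simp
        rwa [hab] at hcx
      have hcx3 : l * Real.exp (a*y) ≤ a * Real.exp (l*y) + (l - a) := by
        have h := mul_le_mul_of_nonneg_left hcx2 hl.le
        have heq2 : l * (a/l * Real.exp (l*y) + (1 - a/l)) = a * Real.exp (l*y) + (l - a) := by
          field_simp
        rwa [heq2] at h
      have hup : (Real.exp (a*y)-1)/a ≤ (Real.exp (l*y)-1)/l := by
        rw [div_le_div_iff₀ ha.1 hl]
        linarith
      rw [Real.norm_eq_abs, abs_le]
      have hlpos : (0:ℝ) ≤ (Real.exp (l*y)+1)/l := by positivity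
      constructor
      · have := neg_abs_le y
        linarith
      · have h5 : (Real.exp (l*y)-1)/l ≤ (Real.exp (l*y)+1)/l := by gcongr <;> linarith
        have := abs_nonneg y
        linarith
    · exact hF.abs.add (((hmgf l hl).add (integrable_const 1)).div_const l)
    · exact hslope
  have hEq : ∀ᶠ a in 𝓝[>] (0:ℝ),
      (∫ ω, (Real.exp (a * F ω) - 1)/a ∂μ) = (M a - 1)/a := by
    filter_upwards [self_mem_nhdsWithin] with a (ha : a ∈ Ioi 0)
    rw [integral_div, integral_sub (hmgf a ha) (integrable_const 1), integral_const]
    simp [hMdef]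
  have hT : Tendsto (fun a => (M a - 1)/a) (𝓝[>] (0:ℝ)) (𝓝 (∫ ω, F ω ∂μ)) :=
    hDCT.congr' hEq
  have hfinal : Real.log (M l)/l - σ^2/2*l ≤ ∫ ω, F ω ∂μ :=
    ge_of_tendsto hT (by
      filter_upwards [Ioo_mem_nhdsGT_of_mem ⟨le_refl (0:ℝ), hl⟩] with a ha
      exact hstep a ha)
  show (1/l) * Real.log (M l) ≤ (∫ ω, F ω ∂μ) + l * σ^2/2
  have hrw : (1/l) * Real.log (M l) = Real.log (M l)/l := by ring
  rw [hrw]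
  linarith
end

section
/- (Herbst-type integral representation) With M(t) = E_{(x,y)∼D}[e^{−t ℓ(w,x,y)}], for any λ > 0: log E_{S∼D^m}[e^{λ(L_D(w) − L_S(w))}] = λ ∫_0^{λ/m} Ent_D[e^{−α ℓ(w,x,y)}] / (α² E_D[e^{−α ℓ(w,x,y)}]) dα. -/
open MeasureTheory Real Filter Set Metric Topology

namespace HerbstAux

lemma key_bound {c x : ℝ} (hc : 0 < c) (hx : 0 ≤ x) : x * exp (-(c * x)) ≤ 1 / (c * exp 1) := by
  rw [le_div_iff₀ (by positivity)]
  have h1 : c * x ≤ exp (c * x - 1) := by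
    have := Real.add_one_le_exp (c * x - 1); linarith
  calc x * exp (-(c * x)) * (c * exp 1) = (c * x) * (exp (-(c * x)) * exp 1) := by ring
    _ ≤ exp (c * x - 1) * (exp (-(c * x)) * exp 1) :=
        mul_le_mul_of_nonneg_right h1 (by positivity)
    _ = 1 := by rw [← Real.exp_add, ← Real.exp_add]; norm_num

lemma pt_entropy {g c : ℝ} (hg : 0 < g) (hc : 0 < c) :
    g - c ≤ g * Real.log g - g * Real.log c := by
  have h1 : Real.log (c / g) ≤ c / g - 1 := Real.log_le_sub_one_of_pos (by positivity)
  rw [Real.log_div hc.ne' hg.ne'] at h1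
  have h2 : g * (c / g) = c := mul_div_cancel₀ _ hg.ne'
  nlinarith [mul_le_mul_of_nonneg_left h1 hg.le]

variable {Ω : Type*} [MeasurableSpace Ω] {D : Measure Ω} [IsProbabilityMeasure D] {ℓ : Ω → ℝ}

lemma int_exp (hmeas : Measurable ℓ) (hnn : ∀ ω, 0 ≤ ℓ ω) {α : ℝ} (hα : 0 ≤ α) :
    Integrable (fun ω => exp (-α * ℓ ω)) D := by
  refine Integrable.mono' (integrable_const 1) ((hmeas.const_mul (-α)).exp.aestronglyMeasurable) ?_
  filter_upwards with ω
  rw [Real.norm_eq_abs, abs_of_pos (exp_pos _), Real.exp_le_one_iff]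
  have := hnn ω; nlinarith

lemma int_mul_exp (hmeas : Measurable ℓ) (hnn : ∀ ω, 0 ≤ ℓ ω) (hint : Integrable ℓ D)
    {α : ℝ} (hα : 0 ≤ α) :
    Integrable (fun ω => ℓ ω * exp (-α * ℓ ω)) D := by
  refine hint.mono' (hmeas.mul ((hmeas.const_mul (-α)).exp)).aestronglyMeasurable ?_
  filter_upwards with ω
  rw [Real.norm_eq_abs, abs_mul, abs_of_nonneg (hnn ω), abs_of_pos (exp_pos _)]
  have h1 : exp (-α * ℓ ω) ≤ 1 := by
    rw [Real.exp_le_one_iff]; have := hnn ω; nlinarith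
  nlinarith [hnn ω, exp_pos (-α * ℓ ω)]

lemma M_pos (hmeas : Measurable ℓ) (hnn : ∀ ω, 0 ≤ ℓ ω) {α : ℝ} (hα : 0 ≤ α) :
    0 < ∫ ω, exp (-α * ℓ ω) ∂D :=
  integral_exp_pos (int_exp hmeas hnn hα)

lemma M_hasDeriv (hmeas : Measurable ℓ) (hnn : ∀ ω, 0 ≤ ℓ ω) {α : ℝ} (hα : 0 < α) :
    HasDerivAt (fun x => ∫ ω, exp (-x * ℓ ω) ∂D) (∫ ω, -(ℓ ω * exp (-α * ℓ ω)) ∂D) α := by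
  have h := hasDerivAt_integral_of_dominated_loc_of_deriv_le (μ := D)
      (F := fun x ω => exp (-x * ℓ ω)) (F' := fun x ω => -(ℓ ω * exp (-x * ℓ ω)))
      (x₀ := α) (bound := fun _ => 1 / ((α/2) * exp 1)) (ball_mem_nhds α (half_pos hα))
      ?_ (int_exp hmeas hnn hα.le) ?_ ?_ (integrable_const _) ?_
  · exact h.2
  · filter_upwards with x
    exact ((hmeas.const_mul (-x)).exp).aestronglyMeasurable
  · exact ((hmeas.mul ((hmeas.const_mul (-α)).exp)).neg).aestronglyMeasurable
  · filter_upwards with ω x hx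
    have hx2 : α/2 < x := by
      have := abs_lt.mp (mem_ball_iff_norm.mp hx); linarith
    rw [norm_neg, Real.norm_eq_abs, abs_mul, abs_of_nonneg (hnn ω), abs_of_pos (exp_pos _)]
    calc ℓ ω * exp (-x * ℓ ω) ≤ ℓ ω * exp (-(α/2 * ℓ ω)) := by
          apply mul_le_mul_of_nonneg_left _ (hnn ω)
          apply Real.exp_le_exp.mpr
          nlinarith [hnn ω]
      _ ≤ 1 / ((α/2) * exp 1) := key_bound (half_pos hα) (hnn ω)
  · filter_upwards with ω x hx
    have h1 : HasDerivAt (fun y : ℝ => y * (-ℓ ω)) (-ℓ ω) x := hasDerivAt_mul_const _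
    have h2 := h1.exp
    simpa [mul_neg, neg_mul, mul_comm] using h2

lemma N_cont (hmeas : Measurable ℓ) (hnn : ∀ ω, 0 ≤ ℓ ω) {α : ℝ} (hα : 0 < α) :
    ContinuousAt (fun x => ∫ ω, ℓ ω * exp (-x * ℓ ω) ∂D) α := by
  unfold ContinuousAt
  apply tendsto_integral_filter_of_dominated_convergence (fun _ => 1 / ((α/2) * exp 1))
  · filter_upwards with x
    exact (hmeas.mul ((hmeas.const_mul (-x)).exp)).aestronglyMeasurable
  · have hev : ∀ᶠ x in 𝓝 α, x ∈ Ioi (α/2) := Ioi_mem_nhds (by linarith)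
    filter_upwards [hev] with x hx
    filter_upwards with ω
    rw [Real.norm_eq_abs, abs_mul, abs_of_nonneg (hnn ω), abs_of_pos (exp_pos _)]
    calc ℓ ω * exp (-x * ℓ ω) ≤ ℓ ω * exp (-(α/2 * ℓ ω)) := by
          apply mul_le_mul_of_nonneg_left _ (hnn ω)
          apply Real.exp_le_exp.mpr
          have := hx.out; nlinarith [hnn ω]
      _ ≤ 1 / ((α/2) * exp 1) := key_bound (half_pos hα) (hnn ω)
  · exact integrable_const _
  · filter_upwards with ω
    exact (continuous_const.mul ((continuous_id.neg.mul continuous_const).rexp)).tendsto α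

lemma ent_nonneg (hmeas : Measurable ℓ) (hnn : ∀ ω, 0 ≤ ℓ ω) (hint : Integrable ℓ D)
    {α : ℝ} (hα : 0 < α) :
    0 ≤ (∫ ω, exp (-α * ℓ ω) * Real.log (exp (-α * ℓ ω)) ∂D)
        - (∫ ω, exp (-α * ℓ ω) ∂D) * Real.log (∫ ω, exp (-α * ℓ ω) ∂D) := by
  set M := ∫ ω, exp (-α * ℓ ω) ∂D with hM
  have hMp : 0 < M := M_pos hmeas hnn hα.le
  have hrw : (fun ω => exp (-α * ℓ ω) * Real.log (exp (-α * ℓ ω)))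
      = (fun ω => -α * (ℓ ω * exp (-α * ℓ ω))) := by
    funext ω; rw [Real.log_exp]; ring
  have hint1 : Integrable (fun ω => exp (-α * ℓ ω) * Real.log (exp (-α * ℓ ω))) D := by
    rw [hrw]; exact (int_mul_exp hmeas hnn hint hα.le).const_mul _
  have hint2 : Integrable (fun ω => exp (-α * ℓ ω) * Real.log (exp (-α * ℓ ω))
      - exp (-α * ℓ ω) * Real.log M) D :=
    hint1.sub ((int_exp hmeas hnn hα.le).mul_const _)
  have hmono : ∀ ω, exp (-α * ℓ ω) - M ≤ exp (-α * ℓ ω) * Real.log (exp (-α * ℓ ω))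
      - exp (-α * ℓ ω) * Real.log M := fun ω => pt_entropy (exp_pos _) hMp
  have h := integral_mono ((int_exp hmeas hnn hα.le).sub (integrable_const M)) hint2 hmono
  simp only [Pi.sub_apply] at h
  rw [integral_sub (int_exp hmeas hnn hα.le) (integrable_const M), integral_const,
    integral_sub hint1 ((int_exp hmeas hnn hα.le).mul_const _), integral_mul_const] at h
  simp only [measure_univ, probReal_univ, smul_eq_mul, one_mul] at h
  linarith

lemma F_limit (hmeas : Measurable ℓ) (hnn : ∀ ω, 0 ≤ ℓ ω) (hint : Integrable ℓ D) :
    Tendsto (fun ε => Real.log (∫ ω, exp (-ε * ℓ ω) ∂D) / ε) (𝓝[>] (0:ℝ))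
      (𝓝 (-∫ ω, ℓ ω ∂D)) := by
  set M : ℝ → ℝ := fun ε => ∫ ω, exp (-ε * ℓ ω) ∂D with hMdef
  have hMle1 : ∀ ε : ℝ, 0 ≤ ε → M ε ≤ 1 := by
    intro ε hε
    have h := integral_mono (μ := D) (int_exp hmeas hnn hε) (integrable_const 1) (fun ω => by
      simp only; rw [Real.exp_le_one_iff]; nlinarith [hnn ω])
    simp only [integral_const, measure_univ, probReal_univ, smul_eq_mul, mul_one] at h
    exact h
  have hMge : ∀ ε : ℝ, 0 ≤ ε → 1 - ε * ∫ ω, ℓ ω ∂D ≤ M ε := by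
    intro ε hε
    have h := integral_mono (μ := D) ((integrable_const 1).sub (hint.const_mul ε))
      (int_exp hmeas hnn hε)
      (fun ω => by
        simp only [Pi.sub_apply]
        have := Real.add_one_le_exp (-ε * ℓ ω); linarith)
    simp only [Pi.sub_apply] at h
    rw [integral_sub (integrable_const 1) (hint.const_mul ε)] at h
    simp only [integral_const, measure_univ, probReal_univ, smul_eq_mul, mul_one] at h
    rw [MeasureTheory.integral_const_mul] at h
    exact h
  have hM1 : Tendsto M (𝓝[>] (0:ℝ)) (𝓝 1) := by
    have hlow : Tendsto (fun ε : ℝ => 1 - ε * ∫ ω, ℓ ω ∂D) (𝓝[>] (0:ℝ)) (𝓝 1) := by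
      have : Tendsto (fun ε : ℝ => 1 - ε * ∫ ω, ℓ ω ∂D) (𝓝 (0:ℝ)) (𝓝 (1 - 0 * ∫ ω, ℓ ω ∂D)) :=
        (continuous_const.sub (continuous_id.mul continuous_const)).tendsto 0
      simpa using this.mono_left nhdsWithin_le_nhds
    refine tendsto_of_tendsto_of_tendsto_of_le_of_le' hlow tendsto_const_nhds ?_ ?_
    · filter_upwards [self_mem_nhdsWithin] with ε (hε : 0 < ε) using hMge ε hε.le
    · filter_upwards [self_mem_nhdsWithin] with ε (hε : 0 < ε) using hMle1 ε hε.le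
  have hQ' : Tendsto (fun ε : ℝ => ∫ ω, (exp (-ε * ℓ ω) - 1) / ε ∂D) (𝓝[>] (0:ℝ))
      (𝓝 (∫ ω, -ℓ ω ∂D)) := by
    apply tendsto_integral_filter_of_dominated_convergence (fun ω => ℓ ω)
    · filter_upwards with ε
      exact (((hmeas.const_mul (-ε)).exp.sub measurable_const).div_const ε).aestronglyMeasurable
    · filter_upwards [self_mem_nhdsWithin] with ε (hε : 0 < ε)
      filter_upwards with ω
      have h1 : exp (-ε * ℓ ω) ≤ 1 := by rw [Real.exp_le_one_iff]; nlinarith [hnn ω]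
      have h2 : -ε * ℓ ω + 1 ≤ exp (-ε * ℓ ω) := Real.add_one_le_exp _
      rw [Real.norm_eq_abs, abs_div, abs_of_pos hε, abs_of_nonpos (by linarith), div_le_iff₀ hε]
      nlinarith [hnn ω]
    · exact hint
    · filter_upwards with ω
      have hd : HasDerivAt (fun x : ℝ => exp (x * -ℓ ω)) (exp ((0:ℝ) * -ℓ ω) * -ℓ ω) 0 :=
        (hasDerivAt_mul_const (-ℓ ω)).exp
      have hs := hasDerivAt_iff_tendsto_slope.mp hd
      have hs2 := hs.mono_left (nhdsWithin_mono 0 (fun x hx => (ne_of_gt hx : x ≠ 0)))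
      simp only [zero_mul, Real.exp_zero, one_mul] at hs2
      refine hs2.congr (fun ε => ?_)
      rw [slope_def_field]
      simp [neg_mul, mul_comm, div_eq_mul_inv]
  have hQ : Tendsto (fun ε : ℝ => (M ε - 1) / ε) (𝓝[>] (0:ℝ)) (𝓝 (-∫ ω, ℓ ω ∂D)) := by
    rw [← integral_neg]
    refine hQ'.congr' ?_
    filter_upwards [self_mem_nhdsWithin] with ε (hε : 0 < ε)
    show ∫ ω, (exp (-ε * ℓ ω) - 1) / ε ∂D = ((∫ ω, exp (-ε * ℓ ω) ∂D) - 1) / ε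
    rw [integral_div, integral_sub (int_exp hmeas hnn hε.le) (integrable_const 1), integral_const]
    simp
  have hup : Tendsto (fun ε : ℝ => (M ε - 1) / ε) (𝓝[>] (0:ℝ)) (𝓝 (-∫ ω, ℓ ω ∂D)) := hQ
  have hlo : Tendsto (fun ε : ℝ => (M ε - 1) / ε * (M ε)⁻¹) (𝓝[>] (0:ℝ))
      (𝓝 (-∫ ω, ℓ ω ∂D)) := by
    have := hQ.mul (hM1.inv₀ one_ne_zero)
    simpa using this
  refine tendsto_of_tendsto_of_tendsto_of_le_of_le' hlo hup ?_ ?_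
  · filter_upwards [self_mem_nhdsWithin] with ε (hε : 0 < ε)
    have hMp : 0 < M ε := M_pos hmeas hnn hε.le
    have h1 : Real.log (M ε)⁻¹ ≤ (M ε)⁻¹ - 1 := Real.log_le_sub_one_of_pos (by positivity)
    rw [Real.log_inv] at h1
    have h2 : (M ε - 1) * (M ε)⁻¹ ≤ Real.log (M ε) := by
      have h3 : (M ε - 1) * (M ε)⁻¹ = 1 - (M ε)⁻¹ := by field_simp
      rw [h3]; linarith
    calc (M ε - 1) / ε * (M ε)⁻¹ = (M ε - 1) * (M ε)⁻¹ / ε := by ring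
      _ ≤ Real.log (M ε) / ε := by gcongr
  · filter_upwards [self_mem_nhdsWithin] with ε (hε : 0 < ε)
    have hMp : 0 < M ε := M_pos hmeas hnn hε.le
    gcongr
    exact Real.log_le_sub_one_of_pos hMp

lemma core (hmeas : Measurable ℓ) (hnn : ∀ ω, 0 ≤ ℓ ω) (hint : Integrable ℓ D)
    {t : ℝ} (ht : 0 < t) :
    ∫ α in (0:ℝ)..t,
        ((∫ ω, Real.exp (-α * ℓ ω) * Real.log (Real.exp (-α * ℓ ω)) ∂D)
            - (∫ ω, Real.exp (-α * ℓ ω) ∂D) * Real.log (∫ ω, Real.exp (-α * ℓ ω) ∂D))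
          / (α ^ 2 * ∫ ω, Real.exp (-α * ℓ ω) ∂D)
      = Real.log (∫ ω, exp (-t * ℓ ω) ∂D) / t + ∫ ω, ℓ ω ∂D := by
  set M : ℝ → ℝ := fun x => ∫ ω, exp (-x * ℓ ω) ∂D with hM
  set N : ℝ → ℝ := fun x => ∫ ω, ℓ ω * exp (-x * ℓ ω) ∂D with hN
  set f : ℝ → ℝ := fun α =>
      ((∫ ω, Real.exp (-α * ℓ ω) * Real.log (Real.exp (-α * ℓ ω)) ∂D)
            - (∫ ω, Real.exp (-α * ℓ ω) ∂D) * Real.log (∫ ω, Real.exp (-α * ℓ ω) ∂D))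
          / (α ^ 2 * ∫ ω, Real.exp (-α * ℓ ω) ∂D) with hf
  set G : ℝ → ℝ := fun x => Real.log (M x) / x with hG
  have f_eq : ∀ x : ℝ, f x = (x * (-N x) - M x * Real.log (M x)) / (x ^ 2 * M x) := by
    intro x
    have h1 : (fun ω => Real.exp (-x * ℓ ω) * Real.log (Real.exp (-x * ℓ ω)))
        = fun ω => x * (-(ℓ ω * Real.exp (-x * ℓ ω))) := by
      funext ω; rw [Real.log_exp]; ring
    have h2 : ∫ ω, Real.exp (-x * ℓ ω) * Real.log (Real.exp (-x * ℓ ω)) ∂D = x * (-N x) := by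
      rw [h1, MeasureTheory.integral_const_mul, hN, ← integral_neg]
    rw [hf]; simp only; rw [h2]
  have hNderiv : ∀ {x : ℝ}, 0 < x → HasDerivAt M (-N x) x := by
    intro x hx
    have := M_hasDeriv (D := D) hmeas hnn hx
    rw [integral_neg] at this
    exact this
  have hG' : ∀ x : ℝ, 0 < x → HasDerivAt G (f x) x := by
    intro x hx
    have hMp : 0 < M x := M_pos hmeas hnn hx.le
    have hlog : HasDerivAt (fun y => Real.log (M y)) (-N x / M x) x :=
      (hNderiv hx).log hMp.ne'
    have hdiv := hlog.div (hasDerivAt_id x) (ne_of_gt hx)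
    have : HasDerivAt G ((-N x / M x * id x - Real.log (M x) * 1) / (id x) ^ 2) x := hdiv
    convert this using 1
    rw [f_eq x]
    simp only [id]
    field_simp
  have hfcont : ∀ x : ℝ, 0 < x → ContinuousAt f x := by
    intro x hx
    have hMp : 0 < M x := M_pos hmeas hnn hx.le
    have hfeq : f = fun x => (x * (-N x) - M x * Real.log (M x)) / (x ^ 2 * M x) :=
      funext f_eq
    rw [hfeq]
    have hMc : ContinuousAt M x := (M_hasDeriv hmeas hnn hx).continuousAt
    have hNc : ContinuousAt N x := N_cont hmeas hnn hx
    exact ((continuousAt_id.mul hNc.neg).sub (hMc.mul (hMc.log hMp.ne'))).div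
      ((continuousAt_id.pow 2).mul hMc) (by positivity)
  have hf_ii : ∀ {ε : ℝ}, 0 < ε → ε ≤ t → IntervalIntegrable f volume ε t := by
    intro ε hε hεt
    apply ContinuousOn.intervalIntegrable
    intro x hx
    have : 0 < x := lt_of_lt_of_le (lt_min hε ht) hx.1
    exact (hfcont x this).continuousWithinAt
  have hFTC : ∀ {ε : ℝ}, 0 < ε → ε ≤ t → ∫ x in ε..t, f x = G t - G ε := by
    intro ε hε hεt
    refine intervalIntegral.integral_eq_sub_of_hasDerivAt (fun x hx => ?_) (hf_ii hε hεt)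
    exact hG' x (lt_of_lt_of_le (lt_min hε ht) hx.1)
  have hlim : Tendsto (fun ε => ∫ x in ε..t, f x) (𝓝[>] (0:ℝ)) (𝓝 (G t + ∫ ω, ℓ ω ∂D)) := by
    have h1 : Tendsto (fun ε => G t - G ε) (𝓝[>] (0:ℝ)) (𝓝 (G t - -∫ ω, ℓ ω ∂D)) :=
      tendsto_const_nhds.sub (F_limit hmeas hnn hint)
    rw [sub_neg_eq_add] at h1
    refine h1.congr' ?_
    filter_upwards [Ioo_mem_nhdsGT_of_mem (Set.left_mem_Ico.mpr ht)] with ε hε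
    exact (hFTC hε.1 hε.2.le).symm
  set u : ℕ → ℝ := fun n => min t (1 / (n + 1)) with hu
  have hu_pos : ∀ n, 0 < u n := fun n => lt_min ht (by positivity)
  have hu_le : ∀ n, u n ≤ t := fun n => min_le_left _ _
  have hu0 : Tendsto u atTop (𝓝 0) := by
    apply squeeze_zero (fun n => (hu_pos n).le) (fun n => min_le_right _ _)
    exact tendsto_one_div_add_atTop_nhds_zero_nat
  have hu_tend : Tendsto u atTop (𝓝[>] (0:ℝ)) :=
    tendsto_nhdsWithin_of_tendsto_nhds_of_eventually_within u hu0
      (Eventually.of_forall fun n => hu_pos n)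
  have hseq : Tendsto (fun n => ∫ x in (u n)..t, f x) atTop (𝓝 (G t + ∫ ω, ℓ ω ∂D)) :=
    hlim.comp hu_tend
  have hf_nonneg : ∀ x ∈ Ioc (0:ℝ) t, 0 ≤ f x := by
    intro x hx
    exact div_nonneg (ent_nonneg hmeas hnn hint hx.1)
      (mul_nonneg (sq_nonneg x) (M_pos hmeas hnn hx.1.le).le)
  have hnorm : ∀ n, ∫ x in Ioc (u n) t, ‖f x‖ = ∫ x in (u n)..t, f x := by
    intro n
    rw [intervalIntegral.integral_of_le (hu_le n)]
    refine setIntegral_congr_fun measurableSet_Ioc (fun x hx => ?_)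
    exact norm_of_nonneg (hf_nonneg x ⟨(hu_pos n).trans hx.1, hx.2⟩)
  have hInt : IntegrableOn f (Ioc 0 t) volume := by
    refine integrableOn_Ioc_of_intervalIntegral_norm_bounded_left
      (I := G t + (∫ ω, ℓ ω ∂D) + 1) (a := u) (b := t) (l := atTop)
      (fun n => (hf_ii (hu_pos n) (hu_le n)).1) hu0 ?_
    have hev := hseq.eventually (eventually_le_nhds (lt_add_one (G t + ∫ ω, ℓ ω ∂D)))
    filter_upwards [hev] with n hn
    rw [hnorm n]
    exact hn
  have hUnion : (⋃ n, Ioc (u n) t) = Ioc (0:ℝ) t := by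
    ext x
    simp only [mem_iUnion, mem_Ioc]
    constructor
    · rintro ⟨n, h1, h2⟩
      exact ⟨(hu_pos n).trans h1, h2⟩
    · rintro ⟨h1, h2⟩
      obtain ⟨n, hn⟩ := exists_nat_one_div_lt h1
      exact ⟨n, lt_of_le_of_lt (min_le_right _ _) (by exact_mod_cast hn), h2⟩
  have hmono : Monotone fun n => Ioc (u n) t := by
    intro a b hab
    apply Ioc_subset_Ioc_left
    apply min_le_min (le_refl t)
    have : (a : ℝ) + 1 ≤ (b : ℝ) + 1 := by exact_mod_cast by omega
    apply one_div_le_one_div_of_le (by positivity) this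
  have hval : Tendsto (fun n => ∫ x in Ioc (u n) t, f x) atTop
      (𝓝 (∫ x in Ioc (0:ℝ) t, f x)) := by
    have := tendsto_setIntegral_of_monotone (fun n => measurableSet_Ioc) hmono
      (hUnion ▸ hInt)
    rwa [hUnion] at this
  have hval2 : Tendsto (fun n => ∫ x in Ioc (u n) t, f x) atTop
      (𝓝 (G t + ∫ ω, ℓ ω ∂D)) := by
    refine hseq.congr fun n => ?_
    rw [intervalIntegral.integral_of_le (hu_le n)]
  have hfinal : ∫ x in Ioc (0:ℝ) t, f x = G t + ∫ ω, ℓ ω ∂D :=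
    tendsto_nhds_unique hval hval2
  calc (∫ α in (0:ℝ)..t, f α) = ∫ x in Ioc (0:ℝ) t, f x :=
        intervalIntegral.integral_of_le ht.le
    _ = G t + ∫ ω, ℓ ω ∂D := hfinal
    _ = Real.log (∫ ω, exp (-t * ℓ ω) ∂D) / t + ∫ ω, ℓ ω ∂D := rfl

end HerbstAux

/-- Herbst-type integral representation:
log E_{S∼D^m}[e^{λ(L_D − L_S)}] = λ ∫_0^{λ/m} Ent_D[e^{−αℓ}] / (α² E_D[e^{−αℓ}]) dα. -/
theorem herbst_integral_representation {Ω : Type*} [MeasurableSpace Ω]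
    (D : Measure Ω) [IsProbabilityMeasure D]
    (m : ℕ) (hm : 0 < m) (ℓ : Ω → ℝ) (hmeas : Measurable ℓ) (hnn : ∀ ω, 0 ≤ ℓ ω)
    (hint : Integrable ℓ D) (lam : ℝ) (hlam : 0 < lam) :
    Real.log (∫ S : Fin m → Ω,
        Real.exp (lam * ((∫ ω, ℓ ω ∂D) - (1 / m : ℝ) * ∑ i, ℓ (S i)))
        ∂(Measure.pi fun _ => D))
      = lam * ∫ α in (0 : ℝ)..(lam / m),
          ((∫ ω, Real.exp (-α * ℓ ω) * Real.log (Real.exp (-α * ℓ ω)) ∂D)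
              - (∫ ω, Real.exp (-α * ℓ ω) ∂D) * Real.log (∫ ω, Real.exp (-α * ℓ ω) ∂D))
            / (α ^ 2 * ∫ ω, Real.exp (-α * ℓ ω) ∂D) := by
  have hm' : (m : ℝ) ≠ 0 := Nat.cast_ne_zero.mpr hm.ne'
  have ht : 0 < lam / m := div_pos hlam (Nat.cast_pos.mpr hm)
  have hcore := HerbstAux.core (D := D) hmeas hnn hint ht
  rw [hcore]
  have hMp : 0 < ∫ ω, Real.exp (-(lam / m) * ℓ ω) ∂D :=
    HerbstAux.M_pos hmeas hnn ht.le
  -- compute LHS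
  letI : MeasureSpace Ω := ⟨D⟩
  haveI : SigmaFinite (volume : Measure Ω) := by
    show SigmaFinite D; infer_instance
  have hrw : ∀ S : Fin m → Ω,
      Real.exp (lam * ((∫ ω, ℓ ω ∂D) - (1 / m : ℝ) * ∑ i, ℓ (S i)))
      = Real.exp (lam * ∫ ω, ℓ ω ∂D) * ∏ i, Real.exp (-(lam / m) * ℓ (S i)) := by
    intro S
    rw [← Real.exp_sum, ← Real.exp_add]
    congr 1
    have : ∑ i, -(lam / m) * ℓ (S i) = -(lam / m) * ∑ i, ℓ (S i) := by
      rw [Finset.mul_sum]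
    rw [this]
    field_simp
    ring
  have hLHS : (∫ S : Fin m → Ω,
      Real.exp (lam * ((∫ ω, ℓ ω ∂D) - (1 / m : ℝ) * ∑ i, ℓ (S i)))
      ∂(Measure.pi fun _ => D))
      = Real.exp (lam * ∫ ω, ℓ ω ∂D) * (∫ ω, Real.exp (-(lam / m) * ℓ ω) ∂D) ^ m := by
    rw [show (Measure.pi fun _ : Fin m => D) = (volume : Measure (Fin m → Ω)) from rfl]
    simp_rw [hrw]
    rw [MeasureTheory.integral_const_mul,
      MeasureTheory.integral_fintype_prod_volume_eq_pow (ι := Fin m) (fun x => Real.exp (-(lam / m) * ℓ x)),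
      Fintype.card_fin]
    rfl
  rw [hLHS, Real.log_mul (Real.exp_ne_zero _) (pow_ne_zero _ hMp.ne'), Real.log_exp,
    Real.log_pow]
  field_simp
  ring
end

section
/- (Log-Sobolev inequality for Rademacher variables) Let Z be uniform on {−1,+1} and f : {−1,+1} → ℝ. Define ∇f(z) = (f(z) − f(−z))/2. Then Ent[e^{f(Z)}] ≤ (1/2) E[(∇f(Z))² e^{f(Z)}]. -/
open Real

noncomputable def Fls (t : ℝ) : ℝ :=
  t ^ 2 * Real.cosh t / 2 - t * Real.sinh t + Real.cosh t * Real.log (Real.cosh t)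

lemma Fls_hasDerivAt (t : ℝ) :
    HasDerivAt Fls (t ^ 2 * Real.sinh t / 2 + Real.sinh t * Real.log (Real.cosh t)) t := by
  have hc : HasDerivAt Real.cosh (Real.sinh t) t := Real.hasDerivAt_cosh t
  have hs : HasDerivAt Real.sinh (Real.cosh t) t := Real.hasDerivAt_sinh t
  have hp : HasDerivAt (fun x : ℝ => x ^ 2) (2 * t) t := by
    simpa using hasDerivAt_pow 2 t
  have hid : HasDerivAt (fun x : ℝ => x) 1 t := hasDerivAt_id t
  have hlog : HasDerivAt (fun x : ℝ => Real.log (Real.cosh x)) (Real.sinh t / Real.cosh t) t := by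
    simpa [Function.comp_def, div_eq_inv_mul] using
      (Real.hasDerivAt_log (Real.cosh_pos (x := t)).ne').comp t hc
  have h1 : HasDerivAt (fun x : ℝ => x ^ 2 * Real.cosh x / 2 - x * Real.sinh x
      + Real.cosh x * Real.log (Real.cosh x))
      ((2 * t * Real.cosh t + t ^ 2 * Real.sinh t) / 2 - (1 * Real.sinh t + t * Real.cosh t)
        + (Real.sinh t * Real.log (Real.cosh t) + Real.cosh t * (Real.sinh t / Real.cosh t))) t :=
    (((hp.mul hc).div_const 2).sub (hid.mul hs)).add (hc.mul hlog)
  have : (2 * t * Real.cosh t + t ^ 2 * Real.sinh t) / 2 - (1 * Real.sinh t + t * Real.cosh t)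
        + (Real.sinh t * Real.log (Real.cosh t) + Real.cosh t * (Real.sinh t / Real.cosh t))
      = t ^ 2 * Real.sinh t / 2 + Real.sinh t * Real.log (Real.cosh t) := by
    field_simp
    ring
  rw [this] at h1
  exact h1

lemma aux_nonneg (t : ℝ) (ht : 0 ≤ t) :
    t * Real.sinh t - Real.cosh t * Real.log (Real.cosh t) ≤ t ^ 2 * Real.cosh t / 2 := by
  have hmono : MonotoneOn Fls (Set.Ici (0 : ℝ)) := by
    apply monotoneOn_of_deriv_nonneg (convex_Ici 0)
    · exact (Differentiable.continuous (fun x => (Fls_hasDerivAt x).differentiableAt)).continuousOn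
    · intro x hx
      exact (Fls_hasDerivAt x).differentiableAt.differentiableWithinAt
    · intro x hx
      rw [(Fls_hasDerivAt x).deriv]
      have hx0 : 0 ≤ x := le_of_lt (by simpa using hx)
      have hs : 0 ≤ Real.sinh x := by simpa using Real.sinh_le_sinh.mpr hx0
      have hl : 0 ≤ Real.log (Real.cosh x) := Real.log_nonneg (Real.one_le_cosh x)
      positivity
  have h0 : Fls 0 = 0 := by simp [Fls]
  have := hmono (Set.self_mem_Ici) (Set.mem_Ici.mpr ht) ht
  rw [h0] at this
  unfold Fls at this
  linarith

lemma aux (t : ℝ) :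
    t * Real.sinh t - Real.cosh t * Real.log (Real.cosh t) ≤ t ^ 2 * Real.cosh t / 2 := by
  rcases le_total 0 t with ht | ht
  · exact aux_nonneg t ht
  · have := aux_nonneg (-t) (by linarith)
    simpa [Real.sinh_neg, Real.cosh_neg, neg_mul, mul_neg] using this

/-- Log-Sobolev inequality for Rademacher variables:
Z uniform on {−1,+1}, ∇f(z) = (f(z) − f(−z))/2, then
Ent[e^{f(Z)}] ≤ (1/2) E[(∇f(Z))² e^{f(Z)}]. Expectations over the uniform
two-point distribution are written out explicitly. -/
theorem rademacher_lsi (f : ℝ → ℝ) :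
    (Real.exp (f 1) * Real.log (Real.exp (f 1))
        + Real.exp (f (-1)) * Real.log (Real.exp (f (-1)))) / 2
      - ((Real.exp (f 1) + Real.exp (f (-1))) / 2)
        * Real.log ((Real.exp (f 1) + Real.exp (f (-1))) / 2)
    ≤ (1 / 2) * ((((f 1 - f (-1)) / 2) ^ 2 * Real.exp (f 1)
        + ((f (-1) - f 1) / 2) ^ 2 * Real.exp (f (-1))) / 2) := by
  set a := f 1
  set b := f (-1)
  set t := (a - b) / 2 with ht
  set m := (a + b) / 2 with hm
  have ha : a = m + t := by rw [hm, ht]; ring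
  have hb : b = m - t := by rw [hm, ht]; ring
  have hea : Real.exp a = Real.exp m * Real.exp t := by rw [ha, Real.exp_add]
  have heb : Real.exp b = Real.exp m * Real.exp (-t) := by
    rw [hb, sub_eq_add_neg, Real.exp_add]
  have hcosh : (Real.exp a + Real.exp b) / 2 = Real.exp m * Real.cosh t := by
    rw [hea, heb, Real.cosh_eq]; ring
  have hlog : Real.log ((Real.exp a + Real.exp b) / 2) = m + Real.log (Real.cosh t) := by
    rw [hcosh, Real.log_mul (Real.exp_ne_zero m) (Real.cosh_pos (x := t)).ne', Real.log_exp]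
  have hbt : (b - a) / 2 = -t := by rw [ht]; ring
  rw [Real.log_exp, Real.log_exp, hlog, hcosh, hbt, hea, heb, ha, hb]
  have key := aux t
  have hE : (0 : ℝ) < Real.exp m := Real.exp_pos m
  have key2 : Real.exp m * (t * Real.sinh t - Real.cosh t * Real.log (Real.cosh t))
      ≤ Real.exp m * (t ^ 2 * Real.cosh t / 2) := by
    exact mul_le_mul_of_nonneg_left key hE.le
  rw [Real.sinh_eq, Real.cosh_eq] at key2
  rw [Real.cosh_eq]
  nlinarith [key2]
end

section
/- (Two-point log-Sobolev inequality, real form) For all real numbers a, b: (1/2)(a² log a² + b² log b²) − ((a² + b²)/2) log((a² + b²)/2) ≤ (1/2)(b − a)², where t log t² is interpreted as 0 at t = 0. -/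
open Real

lemma two_log_le {v : ℝ} (hv : 1 ≤ v) : 2 * Real.log v ≤ v - 1 / v := by
  have key : MonotoneOn (fun v : ℝ => v - 1 / v - 2 * Real.log v) (Set.Ici 1) := by
    have hderiv : ∀ w : ℝ, 1 ≤ w →
        HasDerivAt (fun v : ℝ => v - 1 / v - 2 * Real.log v)
          (1 - (-(1 / w ^ 2)) - 2 * (1 / w)) w := by
      intro w hw
      have hw0 : w ≠ 0 := by positivity
      have h1 : HasDerivAt (fun v : ℝ => 1 / v) (-(1 / w ^ 2)) w := by
        simpa [one_div] using (hasDerivAt_inv hw0)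
      have h2 : HasDerivAt Real.log (1 / w) w := by
        simpa [one_div] using Real.hasDerivAt_log hw0
      exact ((hasDerivAt_id w).sub h1).sub ((h2.const_mul (2:ℝ)))
    apply monotoneOn_of_deriv_nonneg (convex_Ici 1)
    · intro w hw
      exact ((hderiv w hw).continuousAt).continuousWithinAt
    · intro w hw
      rw [interior_Ici] at hw
      exact ((hderiv w hw.le).differentiableAt).differentiableWithinAt
    · intro w hw
      rw [interior_Ici] at hw
      have hw1 : (1:ℝ) ≤ w := le_of_lt hw
      rw [((hderiv w hw1)).deriv]
      have hw0 : 0 < w := by linarith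
      have : 1 - (-(1 / w ^ 2)) - 2 * (1 / w) = (1 - 1/w)^2 := by
        field_simp; ring
      rw [this]; positivity
  have h := key (Set.self_mem_Ici) (Set.mem_Ici.mpr hv) hv
  simp only [Real.log_one] at h
  linarith

lemma deriv_nonneg_aux {y w : ℝ} (hy : 0 < y) (hw : y < w) :
    Real.log w - Real.log ((w + y) / 2) ≤ 1 - Real.sqrt y / Real.sqrt w := by
  set s := Real.sqrt w with hs
  set t := Real.sqrt y with ht
  have hw0 : 0 < w := hy.trans hw
  have hs0 : 0 < s := Real.sqrt_pos.mpr hw0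
  have ht0 : 0 < t := Real.sqrt_pos.mpr hy
  have hst : t < s := by
    exact Real.sqrt_lt_sqrt hy.le hw
  have hs2 : s ^ 2 = w := Real.sq_sqrt hw0.le
  have ht2 : t ^ 2 = y := Real.sq_sqrt hy.le
  have hwy0 : 0 < w + y := by linarith
  set v := Real.sqrt (2 * w / (w + y)) with hvdef
  have hv2 : v ^ 2 = 2 * w / (w + y) := Real.sq_sqrt (by positivity)
  have hv1 : 1 ≤ v := by
    rw [hvdef, show (1:ℝ) = Real.sqrt 1 by simp]
    apply Real.sqrt_le_sqrt
    rw [le_div_iff₀ hwy0]; linarith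
  have hv0 : 0 < v := lt_of_lt_of_le one_pos hv1
  -- log identity
  have hlog : Real.log w - Real.log ((w + y) / 2) = 2 * Real.log v := by
    have he : 2 * w / (w + y) = w / ((w + y) / 2) := by field_simp
    rw [hvdef, Real.log_sqrt (by positivity), he, Real.log_div hw0.ne' (by positivity)]
    ring
  rw [hlog]
  have hbound := two_log_le hv1
  -- now show v - 1/v ≤ 1 - t/s
  have hv2' : v ^ 2 * (s ^ 2 + t ^ 2) = 2 * s ^ 2 := by
    rw [hv2, hs2, ht2]; field_simp
  have h1 : s * (s + t) ≤ v * (s ^ 2 + t ^ 2) := by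
    have hab : 0 ≤ (v * (s ^ 2 + t ^ 2) - s * (s + t)) * (v * (s ^ 2 + t ^ 2) + s * (s + t)) := by
      nlinarith [sq_nonneg (s - t)]
    nlinarith [hab, mul_pos hv0 (show (0:ℝ) < s ^ 2 + t ^ 2 by positivity),
      mul_pos hs0 (show (0:ℝ) < s + t by linarith)]
  have h2 : s * (v ^ 2 - 1) ≤ v * (s - t) := by
    have h2' : s * (v ^ 2 - 1) * (s ^ 2 + t ^ 2) ≤ v * (s - t) * (s ^ 2 + t ^ 2) := by
      have := mul_le_mul_of_nonneg_right h1 (sub_nonneg.mpr hst.le)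
      nlinarith [hv2']
    exact le_of_mul_le_mul_right h2' (by positivity)
  have hfinal : v - 1 / v ≤ 1 - t / s := by
    rw [show v - 1 / v = (v ^ 2 - 1) / v by field_simp,
      show 1 - t / s = (s - t) / s by field_simp,
      div_le_div_iff₀ hv0 hs0]
    nlinarith [h2]
  linarith

lemma key_entropy {x y : ℝ} (hy : 0 < y) (hxy : y ≤ x) :
    x * Real.log x + y * Real.log y - (x + y) * Real.log ((x + y) / 2)
      ≤ x + y - 2 * Real.sqrt x * Real.sqrt y := by
  set f : ℝ → ℝ := fun w => w + y - 2 * Real.sqrt y * Real.sqrt w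
      - w * Real.log w - y * Real.log y + (w + y) * Real.log ((w + y) / 2) with hf
  have hderiv : ∀ w : ℝ, 0 < w →
      HasDerivAt f (1 - 2 * Real.sqrt y * (1 / (2 * Real.sqrt w)) - (Real.log w + 1)
        + 2 * ((Real.log ((w + y) / 2) + 1) * (1 / 2))) w := by
    intro w hw0
    have hm : (w + y) / 2 ≠ 0 := by positivity
    have hg : HasDerivAt (fun w : ℝ => (w + y) / 2) (1 / 2) w :=
      ((hasDerivAt_id w).add_const y).div_const 2
    have h4' : HasDerivAt (fun w : ℝ => ((w + y) / 2) * Real.log ((w + y) / 2))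
        ((Real.log ((w + y) / 2) + 1) * (1 / 2)) w :=
      by have := (Real.hasDerivAt_mul_log hm).comp w hg; exact this
    have h4 := h4'.const_mul (2 : ℝ)
    have h3 := Real.hasDerivAt_mul_log hw0.ne'
    have h2 := (Real.hasDerivAt_sqrt hw0.ne').const_mul (2 * Real.sqrt y)
    have h1 : HasDerivAt (fun w : ℝ => w + y) 1 w := (hasDerivAt_id w).add_const y
    have := ((((h1.sub h2).sub h3).sub_const (y * Real.log y)).add h4)
    have hfe : f = fun w : ℝ => w + y - 2 * Real.sqrt y * Real.sqrt w - w * Real.log w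
        - y * Real.log y + 2 * (((w + y) / 2) * Real.log ((w + y) / 2)) := by
      funext w; simp only [hf]; ring
    rw [hfe]
    exact this
  have hmono : MonotoneOn f (Set.Ici y) := by
    apply monotoneOn_of_deriv_nonneg (convex_Ici y)
    · intro w hw
      exact ((hderiv w (lt_of_lt_of_le hy hw)).continuousAt).continuousWithinAt
    · intro w hw
      rw [interior_Ici] at hw
      exact ((hderiv w (hy.trans hw)).differentiableAt).differentiableWithinAt
    · intro w hw
      rw [interior_Ici] at hw
      have hw0 : 0 < w := hy.trans hw
      rw [(hderiv w hw0).deriv]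
      have haux := deriv_nonneg_aux hy hw
      have hsw : (0:ℝ) < Real.sqrt w := Real.sqrt_pos.mpr hw0
      have : 2 * Real.sqrt y * (1 / (2 * Real.sqrt w)) = Real.sqrt y / Real.sqrt w := by
        field_simp
      rw [this]
      linarith
  have hfx := hmono (Set.self_mem_Ici) (Set.mem_Ici.mpr hxy) hxy
  have hfy : f y = 0 := by
    simp only [hf]
    rw [show 2 * Real.sqrt y * Real.sqrt y = 2 * y by
      rw [mul_assoc, Real.mul_self_sqrt hy.le], show (y + y) / 2 = y by ring]
    ring
  rw [hfy] at hfx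
  simp only [hf] at hfx
  have hcomm : Real.sqrt x * Real.sqrt y = Real.sqrt y * Real.sqrt x := mul_comm _ _
  linarith

lemma key_entropy' {x y : ℝ} (hy : 0 ≤ y) (hxy : y ≤ x) :
    x * Real.log x + y * Real.log y - (x + y) * Real.log ((x + y) / 2)
      ≤ x + y - 2 * Real.sqrt x * Real.sqrt y := by
  rcases hy.lt_or_eq with hy0 | hy0
  · exact key_entropy hy0 hxy
  · subst hy0
    rcases hxy.lt_or_eq with hx0 | hx0
    · simp only [Real.sqrt_zero, mul_zero, add_zero, zero_mul, Real.log_zero, sub_zero]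
      have : Real.log x - Real.log (x / 2) = Real.log 2 := by
        rw [Real.log_div hx0.ne' (by norm_num)]; ring
      have h2 : Real.log 2 < 1 := by
        have := Real.log_two_lt_d9; linarith
      nlinarith [hx0]
    · simp [← hx0]

lemma key_entropy2 {x y : ℝ} (hx : 0 ≤ x) (hy : 0 ≤ y) :
    x * Real.log x + y * Real.log y - (x + y) * Real.log ((x + y) / 2)
      ≤ x + y - 2 * Real.sqrt x * Real.sqrt y := by
  rcases le_total y x with h | h
  · exact key_entropy' hy h
  · have := key_entropy' hx h
    rw [add_comm y x] at this
    have hc : Real.sqrt y * Real.sqrt x = Real.sqrt x * Real.sqrt y := mul_comm _ _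
    linarith

/-- Two-point log-Sobolev inequality, real form. In Mathlib,
`Real.log 0 = 0`, so `a² log a²` is interpreted as 0 at a = 0. -/
theorem two_point_lsi (a b : ℝ) :
    (1 / 2) * (a ^ 2 * Real.log (a ^ 2) + b ^ 2 * Real.log (b ^ 2))
        - ((a ^ 2 + b ^ 2) / 2) * Real.log ((a ^ 2 + b ^ 2) / 2)
      ≤ (1 / 2) * (b - a) ^ 2 := by
  have key := key_entropy2 (sq_nonneg a) (sq_nonneg b)
  rw [Real.sqrt_sq_eq_abs, Real.sqrt_sq_eq_abs] at key
  have hab : a * b ≤ |a| * |b| := by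
    rw [← abs_mul]; exact le_abs_self _
  have hsplit : ((a ^ 2 + b ^ 2) / 2) * Real.log ((a ^ 2 + b ^ 2) / 2)
      = (1 / 2) * ((a ^ 2 + b ^ 2) * Real.log ((a ^ 2 + b ^ 2) / 2)) := by ring
  rw [hsplit]
  nlinarith [key, hab]
end

section
/- (Tensorization of entropy / subadditivity) Let Z_1,…,Z_d be independent random variables and f ≥ 0 a function of (Z_1,…,Z_d) with finite entropy. Then Ent[f(Z_1,…,Z_d)] ≤ E[∑_{i=1}^d Ent_i[f]], where Ent_i denotes the entropy taken over Z_i alone with the other coordinates fixed. -/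
open MeasureTheory Real Function Finset
open scoped ENNReal

lemma enn_split (a : ℝ) : (‖a‖₊ : ℝ≥0∞) = ENNReal.ofReal a + ENNReal.ofReal (-a) := by
  rw [← enorm_eq_nnnorm, Real.enorm_eq_ofReal_abs]
  rcases le_or_gt 0 a with h | h
  · rw [abs_of_nonneg h, ENNReal.ofReal_of_nonpos (neg_nonpos.mpr h), add_zero]
  · rw [abs_of_neg h, ENNReal.ofReal_of_nonpos h.le, zero_add]

lemma young_ineq (u v : ℝ) (hu : 0 ≤ u) : u * v ≤ u * Real.log u - u + Real.exp v := by
  rcases eq_or_lt_of_le hu with h | h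
  · rw [← h]; simpa using (Real.exp_pos v).le
  · have h1 := Real.add_one_le_exp (v - Real.log u)
    have h2 : Real.exp (v - Real.log u) = Real.exp v / u := by
      rw [Real.exp_sub, Real.exp_log h]
    rw [h2] at h1
    have h3 := mul_le_mul_of_nonneg_left h1 h.le
    have h4 : u * (Real.exp v / u) = Real.exp v := by field_simp
    nlinarith [h3, h4]

section AuxLemmas
variable {d : ℕ} {X : Fin d → Type*} [∀ i, MeasurableSpace (X i)]
  (μ : ∀ i, Measure (X i)) [∀ i, IsProbabilityMeasure (μ i)]

/-- Per-coordinate Fubini package. -/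
lemma coord_aux (i : Fin d) (H : (∀ j, X j) → ℝ) (hH : Measurable H)
    (hHi : Integrable H (Measure.pi μ)) :
    Integrable (fun z => ∫ x, H (Function.update z i x) ∂μ i) (Measure.pi μ) ∧
    (∫ z, ∫ x, H (Function.update z i x) ∂μ i ∂Measure.pi μ) = ∫ z, H z ∂Measure.pi μ ∧
    ∀ᵐ z ∂Measure.pi μ, Integrable (fun x => H (Function.update z i x)) (μ i) := by
  letI : Fintype {j : Fin d // j = i} := Subtype.fintype _
  letI : Unique {j : Fin d // j = i} := ⟨⟨⟨i, rfl⟩⟩, fun j => Subtype.ext j.2⟩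
  let e1 := MeasurableEquiv.piEquivPiSubtypeProd X (fun j => j = i)
  let e2 : (∀ j : {j : Fin d // j = i}, X j) ≃ᵐ X i :=
    MeasurableEquiv.piUnique (fun j : {j : Fin d // j = i} => X j)
  let e : (∀ j, X j) ≃ᵐ (X i × ∀ j : {j : Fin d // ¬ j = i}, X j) :=
    e1.trans (e2.prodCongr (MeasurableEquiv.refl _))
  let ν : Measure (∀ j : {j : Fin d // ¬ j = i}, X j) := Measure.pi (fun j => μ j)
  haveI : IsProbabilityMeasure ν := by infer_instance
  have hMP : MeasurePreserving e (Measure.pi μ) ((μ i).prod ν) := by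
    have h1 := measurePreserving_piEquivPiSubtypeProd μ (fun j => j = i)
    exact ((measurePreserving_piUnique (fun j : {j : Fin d // j = i} => μ j)).prod
      (MeasurePreserving.id ν)).comp h1
  have key : ∀ (z : ∀ j, X j) (x : X i), Function.update z i x = e.symm (x, (e z).2) := by
    intro z x
    have : e (Function.update z i x) = (x, (e z).2) := by
      refine Prod.ext ?_ ?_
      · show Function.update z i x i = x
        simp
      · funext j
        show Function.update z i x j.1 = z j.1
        exact Function.update_of_ne j.2 _ _
    rw [← this, MeasurableEquiv.symm_apply_apply]
  set Ht : X i × (∀ j : {j : Fin d // ¬ j = i}, X j) → ℝ := fun p => H (e.symm p) with hHt_def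
  have hHt_meas : Measurable Ht := hH.comp e.symm.measurable
  have hHt : Integrable Ht ((μ i).prod ν) := by
    rw [← hMP.map_eq]
    refine (integrable_map_equiv e Ht).mpr ?_
    have : Ht ∘ e = H := by funext z; simp [hHt_def]
    rwa [this]
  have hfiber : ∀ z, (fun x => H (Function.update z i x)) = fun x => Ht (x, (e z).2) := by
    intro z; funext x; rw [key z x]
  have hsnd : MeasurePreserving (fun z => (e z).2) (Measure.pi μ) ν := by
    refine ⟨measurable_snd.comp e.measurable, ?_⟩
    have : (fun z => (e z).2) = Prod.snd ∘ e := rfl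
    rw [this, ← Measure.map_map measurable_snd e.measurable, hMP.map_eq,
      Measure.map_snd_prod, measure_univ, one_smul]
  refine ⟨?_, ?_, ?_⟩
  · have h1 : Integrable (fun w => ∫ x, Ht (x, w) ∂μ i) ν := hHt.integral_prod_right
    have h2 : Integrable ((fun w => ∫ x, Ht (x, w) ∂μ i) ∘ (fun z => (e z).2))
        (Measure.pi μ) := by
      refine (integrable_map_measure ?_ hsnd.measurable.aemeasurable).mp ?_
      · rw [hsnd.map_eq]; exact h1.aestronglyMeasurable
      · rw [hsnd.map_eq]; exact h1
    have : (fun z => ∫ x, H (Function.update z i x) ∂μ i)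
        = (fun w => ∫ x, Ht (x, w) ∂μ i) ∘ (fun z => (e z).2) := by
      funext z; simp only [Function.comp]; rw [hfiber z]
    rw [this]; exact h2
  · have h1 : Integrable (fun w => ∫ x, Ht (x, w) ∂μ i) ν := hHt.integral_prod_right
    have e1 : (∫ z, ∫ x, H (Function.update z i x) ∂μ i ∂Measure.pi μ)
        = ∫ z, ∫ x, Ht (x, (e z).2) ∂μ i ∂Measure.pi μ := by
      congr 1; funext z
      congr 1; exact hfiber z
    have h3 : ∫ z, (∫ x, Ht (x, (e z).2) ∂μ i) ∂Measure.pi μ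
        = ∫ w, (∫ x, Ht (x, w) ∂μ i) ∂ν := by
      have := integral_map (φ := fun z => (e z).2) (μ := Measure.pi μ)
        hsnd.measurable.aemeasurable (f := fun w => ∫ x, Ht (x, w) ∂μ i)
        (by rw [hsnd.map_eq]; exact h1.aestronglyMeasurable)
      rw [hsnd.map_eq] at this; exact this.symm
    have e2 : ∫ w, ∫ x, Ht (x, w) ∂μ i ∂ν = ∫ p, Ht p ∂((μ i).prod ν) := by
      rw [← integral_prod_swap Ht]
      exact (integral_prod _ hHt.swap).symm
    have h4 : ∫ p, Ht p ∂((μ i).prod ν) = ∫ z, H z ∂Measure.pi μ := by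
      have := integral_map (φ := ⇑e) (μ := Measure.pi μ) hMP.measurable.aemeasurable
        (f := Ht) (by rw [hMP.map_eq]; exact hHt.aestronglyMeasurable)
      rw [hMP.map_eq] at this
      rw [this]
      congr 1; funext z; simp [hHt_def]
    rw [e1, h3, e2, h4]
  · have h1 : ∀ᵐ w ∂ν, Integrable (fun x => Ht (x, w)) (μ i) := hHt.prod_left_ae
    have h2 := ae_of_ae_map hsnd.measurable.aemeasurable (by rw [hsnd.map_eq]; exact h1)
    filter_upwards [h2] with z hz
    rw [hfiber z]; exact hz

lemma lmarg_invariant (s : Finset (Fin d)) (g : (∀ j, X j) → ℝ≥0∞) :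
    lmarginal μ s (lmarginal μ s g) = lmarginal μ s g := by
  funext z
  rw [lmarginal]
  have h : ∀ y, (lmarginal μ s g) (updateFinset z s y) = (lmarginal μ s g) z := by
    intro y
    exact lmarginal_congr μ g (fun j hj => by simp [Function.updateFinset, hj])
  simp_rw [h]
  rw [lintegral_const]
  simp

lemma lmarg_lintegral_eq (s : Finset (Fin d)) (φ : (∀ j, X j) → ℝ≥0∞) (hφ : Measurable φ) :
    ∫⁻ z, (lmarginal μ s φ) z ∂Measure.pi μ = ∫⁻ z, φ z ∂Measure.pi μ :=
  lintegral_eq_of_lmarginal_eq s (hφ.lmarginal μ) hφ (lmarg_invariant μ s φ)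

lemma lmarg_pos (s : Finset (Fin d)) (φ : (∀ j, X j) → ℝ≥0∞) (hφ : Measurable φ) :
    ∀ᵐ z ∂Measure.pi μ, φ z ≠ 0 → lmarginal μ s φ z ≠ 0 := by
  classical
  set u : (∀ j, X j) → ℝ≥0∞ := fun z => φ z * (if lmarginal μ s φ z = 0 then 1 else 0)
    with hu_def
  have hu_meas : Measurable u := by
    apply hφ.mul
    exact Measurable.ite (((hφ.lmarginal μ)) (measurableSet_singleton 0)) measurable_const
      measurable_const
  have hmarg : lmarginal μ s u = lmarginal μ s (fun _ => (0 : ℝ≥0∞)) := by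
    funext z
    have hz : ∀ y, lmarginal μ s φ (updateFinset z s y) = lmarginal μ s φ z := fun y =>
      lmarginal_congr μ φ (fun j hj => by simp [Function.updateFinset, hj])
    rw [lmarginal]
    have : ∀ y : (∀ j : s, X j),
        u (updateFinset z s y) = φ (updateFinset z s y) *
          (if lmarginal μ s φ z = 0 then 1 else 0) := by
      intro y; rw [hu_def]; simp only []; rw [hz y]
    simp_rw [this]
    rw [lintegral_mul_const _ (show Measurable fun y : ∀ j : s, X j => φ (updateFinset z s y) from hφ.comp measurable_updateFinset)]
    have : (∫⁻ y : (∀ j : s, X j), φ (updateFinset z s y)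
        ∂Measure.pi fun j : s => μ j) = lmarginal μ s φ z := rfl
    rw [this]
    by_cases h : lmarginal μ s φ z = 0 <;> simp only [h, ↓reduceIte, mul_one, mul_zero] <;> simp [lmarginal]
  have hzero : ∫⁻ z, u z ∂Measure.pi μ = 0 := by
    rw [lintegral_eq_of_lmarginal_eq s hu_meas measurable_const hmarg]
    simp
  have := (lintegral_eq_zero_iff hu_meas).mp hzero
  filter_upwards [this] with z hz hφz
  intro hm
  rw [hu_def] at hz
  simp only [hm, if_pos] at hz
  simp only [mul_one] at hz
  exact hφz hz

lemma mul_log_marginal (i : Fin d) (f : (∀ j, X j) → ℝ) (hf : Measurable f)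
    (hnn : ∀ z, 0 ≤ f z)
    (hK : Integrable (fun z => ((lmarginal μ {i} fun w => ENNReal.ofReal (f w)) z).toReal *
        Real.log (((lmarginal μ {i} fun w => ENNReal.ofReal (f w)) z).toReal))
        (Measure.pi μ)) :
    Integrable (fun z => f z *
        Real.log (((lmarginal μ {i} fun w => ENNReal.ofReal (f w)) z).toReal))
        (Measure.pi μ) ∧
    ∫ z, f z * Real.log (((lmarginal μ {i} fun w => ENNReal.ofReal (f w)) z).toReal)
        ∂Measure.pi μ
      = ∫ z, ((lmarginal μ {i} fun w => ENNReal.ofReal (f w)) z).toReal *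
          Real.log (((lmarginal μ {i} fun w => ENNReal.ofReal (f w)) z).toReal)
          ∂Measure.pi μ := by
  have hΦm : Measurable (fun w => ENNReal.ofReal (f w)) := ENNReal.measurable_ofReal.comp hf
  set Q : (∀ j, X j) → ℝ≥0∞ := lmarginal μ {i} (fun w => ENNReal.ofReal (f w)) with hQ
  have hQm : Measurable Q := hΦm.lmarginal μ
  set D : (∀ j, X j) → ℝ := fun z => (Q z).toReal with hD
  have hDm : Measurable D := hQm.ennreal_toReal
  have hDnn : ∀ z, 0 ≤ D z := fun z => ENNReal.toReal_nonneg
  have hQinv : ∀ (z) (x : X i), Q (Function.update z i x) = Q z := fun z x =>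
    lmarginal_update_of_mem μ (Finset.mem_singleton_self i) _ _ _
  have hDinv : ∀ (z) (x : X i), D (Function.update z i x) = D z := by
    intro z x
    show (Q (Function.update z i x)).toReal = (Q z).toReal
    rw [hQinv z x]
  -- generic computation of the singleton marginal of ofReal (f * c) for invariant c
  have marg_c : ∀ (c : (∀ j, X j) → ℝ), (∀ (z) (x : X i), c (Function.update z i x) = c z) →
      ∀ z, lmarginal μ {i} (fun w => ENNReal.ofReal (f w * c w)) z
        = Q z * ENNReal.ofReal (c z) := by
    intro c hc z
    rw [lmarginal_singleton]
    have h1 : ∀ x : X i, ENNReal.ofReal (f (Function.update z i x) * c (Function.update z i x))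
        = (fun w => ENNReal.ofReal (f w)) (Function.update z i x) * ENNReal.ofReal (c z) := by
      intro x
      rw [hc z x, ENNReal.ofReal_mul (hnn _)]
    simp_rw [h1]
    rw [lintegral_mul_const _ (show Measurable fun x : X i =>
      (fun w => ENNReal.ofReal (f w)) (Function.update z i x) from
      hΦm.comp (measurable_update z))]
    rw [hQ, lmarginal_singleton]
  have hHm : Measurable (fun z => f z * Real.log (D z)) :=
    hf.mul (Real.measurable_log.comp hDm)
  have hKm : Measurable (fun z => D z * Real.log (D z)) :=
    hDm.mul (Real.measurable_log.comp hDm)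
  have hclog : ∀ (z) (x : X i),
      (fun w => Real.log (D w)) (Function.update z i x) = (fun w => Real.log (D w)) z := by
    intro z x
    show Real.log (D (Function.update z i x)) = Real.log (D z)
    rw [hDinv z x]
  have hcnlog : ∀ (z) (x : X i),
      (fun w => -Real.log (D w)) (Function.update z i x) = (fun w => -Real.log (D w)) z := by
    intro z x
    show -Real.log (D (Function.update z i x)) = -Real.log (D z)
    rw [hDinv z x]
  have hmargK : ∀ (g : (∀ j, X j) → ℝ≥0∞), (∀ (z) (x : X i), g (Function.update z i x) = g z) →
      lmarginal μ {i} g = g := by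
    intro g hg
    funext z
    rw [lmarginal_singleton]
    simp_rw [hg z]
    rw [lintegral_const, measure_univ, mul_one]
  have hofRealD : ∀ z, Q z * ENNReal.ofReal (Real.log (D z))
      = ENNReal.ofReal (D z) * ENNReal.ofReal (Real.log (D z)) := by
    intro z
    rcases eq_or_ne (Q z) ∞ with hQt | hQt
    · have hDz : D z = 0 := by show (Q z).toReal = 0; rw [hQt]; simp
      rw [hDz]; simp
    · congr 1
      show Q z = ENNReal.ofReal (Q z).toReal
      rw [ENNReal.ofReal_toReal hQt]
  have hofRealD' : ∀ z, Q z * ENNReal.ofReal (-Real.log (D z))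
      = ENNReal.ofReal (D z) * ENNReal.ofReal (-Real.log (D z)) := by
    intro z
    rcases eq_or_ne (Q z) ∞ with hQt | hQt
    · have hDz : D z = 0 := by show (Q z).toReal = 0; rw [hQt]; simp
      rw [hDz]; simp
    · congr 1
      show Q z = ENNReal.ofReal (Q z).toReal
      rw [ENNReal.ofReal_toReal hQt]
  have hpos : lmarginal μ {i} (fun z => ENNReal.ofReal (f z * Real.log (D z)))
      = lmarginal μ {i} (fun z => ENNReal.ofReal (D z * Real.log (D z))) := by
    rw [hmargK (fun z => ENNReal.ofReal (D z * Real.log (D z)))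
      (fun z x => by
        show ENNReal.ofReal (D (Function.update z i x) * Real.log (D (Function.update z i x)))
          = ENNReal.ofReal (D z * Real.log (D z))
        rw [hDinv z x])]
    funext z
    have h1 : lmarginal μ {i} (fun z => ENNReal.ofReal (f z * Real.log (D z))) z
        = Q z * ENNReal.ofReal (Real.log (D z)) := marg_c (fun w => Real.log (D w)) hclog z
    rw [h1, hofRealD z, ← ENNReal.ofReal_mul (hDnn z)]
  have hneg : lmarginal μ {i} (fun z => ENNReal.ofReal (-(f z * Real.log (D z))))
      = lmarginal μ {i} (fun z => ENNReal.ofReal (-(D z * Real.log (D z)))) := by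
    rw [show (fun z => ENNReal.ofReal (-(f z * Real.log (D z))))
        = fun z => ENNReal.ofReal (f z * (-Real.log (D z))) from
      funext fun w => by rw [neg_mul_eq_mul_neg]]
    rw [show (fun z => ENNReal.ofReal (-(D z * Real.log (D z))))
        = fun z => ENNReal.ofReal (D z * (-Real.log (D z))) from
      funext fun w => by rw [neg_mul_eq_mul_neg]]
    rw [hmargK (fun z => ENNReal.ofReal (D z * (-Real.log (D z))))
      (fun z x => by
        show ENNReal.ofReal (D (Function.update z i x) * -Real.log (D (Function.update z i x)))
          = ENNReal.ofReal (D z * -Real.log (D z))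
        rw [hDinv z x])]
    funext z
    have h1 : lmarginal μ {i} (fun z => ENNReal.ofReal (f z * (-Real.log (D z)))) z
        = Q z * ENNReal.ofReal (-Real.log (D z)) := marg_c (fun w => -Real.log (D w)) hcnlog z
    rw [h1, hofRealD' z, ← ENNReal.ofReal_mul (hDnn z)]
  have hlpos : ∫⁻ z, ENNReal.ofReal (f z * Real.log (D z)) ∂Measure.pi μ
      = ∫⁻ z, ENNReal.ofReal (D z * Real.log (D z)) ∂Measure.pi μ :=
    lintegral_eq_of_lmarginal_eq {i}
      (show Measurable fun z => ENNReal.ofReal (f z * Real.log (D z)) from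
        ENNReal.measurable_ofReal.comp hHm)
      (show Measurable fun z => ENNReal.ofReal (D z * Real.log (D z)) from
        ENNReal.measurable_ofReal.comp hKm) hpos
  have hlneg : ∫⁻ z, ENNReal.ofReal (-(f z * Real.log (D z))) ∂Measure.pi μ
      = ∫⁻ z, ENNReal.ofReal (-(D z * Real.log (D z))) ∂Measure.pi μ :=
    lintegral_eq_of_lmarginal_eq {i}
      (show Measurable fun z => ENNReal.ofReal (-(f z * Real.log (D z))) from
        ENNReal.measurable_ofReal.comp hHm.neg)
      (show Measurable fun z => ENNReal.ofReal (-(D z * Real.log (D z))) from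
        ENNReal.measurable_ofReal.comp hKm.neg) hneg
  have hKfin : (∫⁻ z, (‖D z * Real.log (D z)‖₊ : ℝ≥0∞) ∂Measure.pi μ) < ∞ := hK.2
  have hKp_fin : ∫⁻ z, ENNReal.ofReal (D z * Real.log (D z)) ∂Measure.pi μ < ∞ :=
    lt_of_le_of_lt (lintegral_mono fun z => Real.ofReal_le_enorm _) hKfin
  have hKn_fin : ∫⁻ z, ENNReal.ofReal (-(D z * Real.log (D z))) ∂Measure.pi μ < ∞ :=
    lt_of_le_of_lt (lintegral_mono fun z => by
      have := Real.ofReal_le_enorm (-(D z * Real.log (D z))); rw [enorm_neg] at this; exact this) hKfin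
  have hHint : Integrable (fun z => f z * Real.log (D z)) (Measure.pi μ) := by
    refine ⟨hHm.aestronglyMeasurable, ?_⟩
    rw [hasFiniteIntegral_def]
    have h2 : ∀ z, ‖f z * Real.log (D z)‖ₑ
        = ENNReal.ofReal (f z * Real.log (D z)) + ENNReal.ofReal (-(f z * Real.log (D z))) :=
      fun z => enn_split _
    simp_rw [h2]
    rw [lintegral_add_left (show Measurable fun z =>
      ENNReal.ofReal (f z * Real.log (D z)) from ENNReal.measurable_ofReal.comp hHm)]
    rw [hlpos, hlneg]
    exact ENNReal.add_lt_top.mpr ⟨hKp_fin, hKn_fin⟩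
  refine ⟨hHint, ?_⟩
  rw [integral_eq_lintegral_pos_part_sub_lintegral_neg_part hHint,
    integral_eq_lintegral_pos_part_sub_lintegral_neg_part hK]
  simp_rw [hlpos, hlneg]
  rfl

end AuxLemmas

/-- Tensorization / subadditivity of entropy:
Ent[f(Z₁,…,Z_d)] ≤ E[∑ᵢ Entᵢ[f]] for independent Z₁,…,Z_d and f ≥ 0. -/
theorem entropy_tensorization {d : ℕ} {X : Fin d → Type*}
    [∀ i, MeasurableSpace (X i)]
    (μ : ∀ i, Measure (X i)) [∀ i, IsProbabilityMeasure (μ i)]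
    (f : (∀ i, X i) → ℝ) (hmeas : Measurable f) (hnn : ∀ z, 0 ≤ f z)
    (hint : Integrable f (Measure.pi μ))
    (hint2 : Integrable (fun z => f z * Real.log (f z)) (Measure.pi μ))
    (hint3 : Integrable (fun z => ∑ i,
        ((∫ x, f (Function.update z i x) * Real.log (f (Function.update z i x)) ∂(μ i))
          - (∫ x, f (Function.update z i x) ∂(μ i))
            * Real.log (∫ x, f (Function.update z i x) ∂(μ i)))) (Measure.pi μ)) :
    (∫ z, f z * Real.log (f z) ∂(Measure.pi μ))
        - (∫ z, f z ∂(Measure.pi μ)) * Real.log (∫ z, f z ∂(Measure.pi μ))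
      ≤ ∫ z, (∑ i,
          ((∫ x, f (Function.update z i x) * Real.log (f (Function.update z i x)) ∂(μ i))
            - (∫ x, f (Function.update z i x) ∂(μ i))
              * Real.log (∫ x, f (Function.update z i x) ∂(μ i)))) ∂(Measure.pi μ) := by
  classical
  set pm := Measure.pi μ with hpm
  set B := ∫ z, f z ∂pm with hB
  set A := ∫ z, f z * Real.log (f z) ∂pm with hA
  have hBnn : 0 ≤ B := integral_nonneg hnn
  have hfLf_meas : Measurable (fun z => f z * Real.log (f z)) :=
    hmeas.mul (Real.measurable_log.comp hmeas)
  have hΦm : Measurable (fun w => ENNReal.ofReal (f w)) := ENNReal.measurable_ofReal.comp hmeas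
  -- the marginals
  set S : ℕ → Finset (Fin d) := fun k => Finset.univ.filter (fun j => (j : ℕ) < k) with hS
  set F : ℕ → (∀ j, X j) → ℝ≥0∞ :=
    fun k => lmarginal μ (S k) (fun w => ENNReal.ofReal (f w)) with hF
  have hFm : ∀ k, Measurable (F k) := fun k => hΦm.lmarginal μ
  set G : Fin d → (∀ j, X j) → ℝ≥0∞ :=
    fun i => lmarginal μ {i} (fun w => ENNReal.ofReal (f w)) with hG
  have hGm : ∀ i, Measurable (G i) := fun i => hΦm.lmarginal μ
  -- the fiberwise integral of f equals the toReal of the marginal, pointwise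
  have hgi : ∀ (i : Fin d) (z), (∫ x, f (Function.update z i x) ∂μ i) = (G i z).toReal := by
    intro i z
    rw [integral_eq_lintegral_of_nonneg_ae (ae_of_all _ fun x => hnn _)
      ((show Measurable fun x => f (Function.update z i x) from
        hmeas.comp (measurable_update z)).aestronglyMeasurable)]
    rw [hG]; simp only []
    rw [lmarginal_singleton]
  -- lintegral of ofReal f
  have hlB : ∫⁻ z, ENNReal.ofReal (f z) ∂pm = ENNReal.ofReal B := by
    have h1 : B = (∫⁻ z, ENNReal.ofReal (f z) ∂pm).toReal := by
      rw [hB, integral_eq_lintegral_of_nonneg_ae (ae_of_all _ hnn)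
        hmeas.aestronglyMeasurable]
    have h2 : ∫⁻ z, ENNReal.ofReal (f z) ∂pm ≠ ∞ := by
      have h3 : ∀ z, ENNReal.ofReal (f z) = (‖f z‖₊ : ℝ≥0∞) :=
        fun z => (Real.enorm_eq_ofReal (hnn z)).symm
      simp_rw [h3]
      exact hint.2.ne
    rw [h1, ENNReal.ofReal_toReal h2]
  have hlB_ne : ∫⁻ z, ENNReal.ofReal (f z) ∂pm ≠ ∞ := by
    rw [hlB]; exact ENNReal.ofReal_ne_top
  -- coordinate Fubini packages
  have cf : ∀ i : Fin d, Integrable (fun z => ∫ x, f (Function.update z i x) ∂μ i) pm ∧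
      (∫ z, ∫ x, f (Function.update z i x) ∂μ i ∂pm) = B ∧
      ∀ᵐ z ∂pm, Integrable (fun x => f (Function.update z i x)) (μ i) :=
    fun i => coord_aux μ i f hmeas hint
  have cL : ∀ i : Fin d, Integrable
        (fun z => ∫ x, f (Function.update z i x) * Real.log (f (Function.update z i x)) ∂μ i) pm ∧
      (∫ z, ∫ x, f (Function.update z i x) * Real.log (f (Function.update z i x)) ∂μ i ∂pm) = A ∧
      ∀ᵐ z ∂pm, Integrable
        (fun x => f (Function.update z i x) * Real.log (f (Function.update z i x))) (μ i) :=
    fun i => coord_aux μ i _ hfLf_meas hint2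
  -- notation for the statement's conditional entropies
  set Ent : Fin d → (∀ j, X j) → ℝ := fun i z =>
    (∫ x, f (Function.update z i x) * Real.log (f (Function.update z i x)) ∂μ i)
      - (∫ x, f (Function.update z i x) ∂μ i)
        * Real.log (∫ x, f (Function.update z i x) ∂μ i) with hEnt
  -- Jensen: each conditional entropy is a.e. nonnegative
  have hEntnn : ∀ i : Fin d, ∀ᵐ z ∂pm, 0 ≤ Ent i z := by
    intro i
    filter_upwards [(cf i).2.2, (cL i).2.2] with z h1 h2
    have hJ := (Real.convexOn_mul_log).map_integral_le (μ := μ i)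
      (f := fun x => f (Function.update z i x))
      Real.continuous_mul_log.continuousOn isClosed_Ici
      (ae_of_all _ fun x => Set.mem_Ici.mpr (hnn _)) h1 h2
    rw [hEnt]; simp only []
    linarith [hJ]
  -- each conditional entropy is integrable
  have hEntaesm : ∀ i : Fin d, AEStronglyMeasurable (Ent i) pm := by
    intro i
    have h1 : Ent i = fun z =>
        (∫ x, f (Function.update z i x) * Real.log (f (Function.update z i x)) ∂μ i)
          - (G i z).toReal * Real.log ((G i z).toReal) := by
      funext z; rw [hEnt]; simp only []; rw [hgi i z]
    rw [h1]
    exact ((cL i).1.aestronglyMeasurable).sub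
      (((hGm i).ennreal_toReal.mul
        (Real.measurable_log.comp (hGm i).ennreal_toReal)).aestronglyMeasurable)
  have hEntint : ∀ i : Fin d, Integrable (Ent i) pm := by
    intro i
    refine Integrable.mono hint3 (hEntaesm i) ?_
    have hall : ∀ᵐ z ∂pm, ∀ j : Fin d, 0 ≤ Ent j z := ae_all_iff.mpr hEntnn
    filter_upwards [hall] with z hz
    rw [Real.norm_of_nonneg (hz i), Real.norm_of_nonneg (Finset.sum_nonneg fun j _ => hz j)]
    exact Finset.single_le_sum (fun j _ => hz j) (Finset.mem_univ i)
  set E : Fin d → ℝ := fun i => ∫ z, Ent i z ∂pm with hE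
  -- marginal × log marginal is integrable with integral A - E i
  have hKfact : ∀ i : Fin d,
      Integrable (fun z => (G i z).toReal * Real.log ((G i z).toReal)) pm ∧
      ∫ z, (G i z).toReal * Real.log ((G i z).toReal) ∂pm = A - E i := by
    intro i
    have h1 : (fun z => (G i z).toReal * Real.log ((G i z).toReal)) = fun z =>
        (∫ x, f (Function.update z i x) * Real.log (f (Function.update z i x)) ∂μ i)
          - Ent i z := by
      funext z; rw [hEnt]; simp only []; rw [hgi i z]; ring
    constructor
    · rw [h1]; exact (cL i).1.sub (hEntint i)
    · rw [h1, integral_sub (cL i).1 (hEntint i), (cL i).2.1, hE]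
  -- f × log marginal is integrable with the same integral
  have hHfact : ∀ i : Fin d,
      Integrable (fun z => f z * Real.log ((G i z).toReal)) pm ∧
      ∫ z, f z * Real.log ((G i z).toReal) ∂pm = A - E i := by
    intro i
    have h := mul_log_marginal μ i f hmeas hnn (hKfact i).1
    exact ⟨h.1, h.2.trans (hKfact i).2⟩
  -- Finset facts about S
  have hSdisj : ∀ i : Fin d, Disjoint {i} (S (i : ℕ)) := by
    intro i
    rw [Finset.disjoint_left]
    intro j hj
    rw [Finset.mem_singleton] at hj
    subst hj
    rw [hS]; simp
  have hSins : ∀ i : Fin d, {i} ∪ S (i : ℕ) = S ((i : ℕ) + 1) := by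
    intro i
    ext j
    rw [hS]; simp only [Finset.mem_union, Finset.mem_singleton, Finset.mem_filter,
      Finset.mem_univ, true_and]
    constructor
    · rintro (rfl | h)
      · exact Nat.lt_succ_self _
      · exact Nat.lt_succ_of_lt h
    · intro h
      rcases Nat.lt_succ_iff_lt_or_eq.mp h with h | h
      · exact Or.inr h
      · exact Or.inl (Fin.ext h)
  have hFk1 : ∀ i : Fin d, lmarginal μ {i} (F (i : ℕ)) = F ((i : ℕ) + 1) := by
    intro i
    rw [hF]; simp only []
    rw [← hSins i, lmarginal_union μ _ hΦm (hSdisj i)]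
  -- invariance of G i and F (i+1) under update at i
  have hGinv : ∀ (i : Fin d) (z) (x : X i), G i (Function.update z i x) = G i z := fun i z x =>
    lmarginal_update_of_mem μ (Finset.mem_singleton_self i) _ _ _
  have hFinv : ∀ (i : Fin d) (z) (x : X i),
      F ((i : ℕ) + 1) (Function.update z i x) = F ((i : ℕ) + 1) z := by
    intro i z x
    rw [hF]; simp only []
    exact lmarginal_update_of_mem μ (by rw [← hSins i]; simp) _ _ _
  -- the ENNReal correction term W and its integral bound
  set W : Fin d → (∀ j, X j) → ℝ≥0∞ := fun i z => G i z * F (i : ℕ) z / F ((i : ℕ) + 1) z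
    with hW
  have hWm : ∀ i : Fin d, Measurable (W i) := fun i =>
    ((hGm i).mul (hFm _)).div (hFm _)
  have hWlint : ∀ i : Fin d, ∫⁻ z, W i z ∂pm ≤ ENNReal.ofReal B := by
    intro i
    rw [← hlB]
    refine lintegral_le_of_lmarginal_le {i} (hWm i) hΦm ?_
    intro z
    have h1 : ∀ x : X i, W i (Function.update z i x)
        = (G i z * (F ((i : ℕ) + 1) z)⁻¹) * F (i : ℕ) (Function.update z i x) := by
      intro x
      rw [hW]; simp only []
      rw [hGinv i z x, hFinv i z x, ENNReal.div_eq_inv_mul]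
      ring
    rw [lmarginal_singleton]
    simp_rw [h1]
    rw [lintegral_const_mul _ (show Measurable fun x : X i =>
      F (i : ℕ) (Function.update z i x) from (hFm _).comp (measurable_update z))]
    have h2 : (∫⁻ x, F (i : ℕ) (Function.update z i x) ∂μ i) = F ((i : ℕ) + 1) z := by
      rw [← hFk1 i, lmarginal_singleton]
    rw [h2]
    have h3 : (F ((i : ℕ) + 1) z)⁻¹ * F ((i : ℕ) + 1) z ≤ 1 := by
      rcases eq_or_ne (F ((i : ℕ) + 1) z) 0 with h | h
      · rw [h]; simp
      · rcases eq_or_ne (F ((i : ℕ) + 1) z) ∞ with h' | h'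
        · rw [h']; simp
        · rw [ENNReal.inv_mul_cancel h h']
    calc G i z * (F ((i : ℕ) + 1) z)⁻¹ * F ((i : ℕ) + 1) z
        = G i z * ((F ((i : ℕ) + 1) z)⁻¹ * F ((i : ℕ) + 1) z) := by ring
      _ ≤ G i z * 1 := mul_le_mul_right h3 _
      _ = G i z := mul_one _
  -- the real correction term L
  set L : Fin d → (∀ j, X j) → ℝ := fun i z =>
    (G i z).toReal * (F (i : ℕ) z).toReal / (F ((i : ℕ) + 1) z).toReal with hL
  have hLnn : ∀ i z, 0 ≤ L i z := fun i z =>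
    div_nonneg (mul_nonneg ENNReal.toReal_nonneg ENNReal.toReal_nonneg) ENNReal.toReal_nonneg
  have hLm : ∀ i : Fin d, Measurable (L i) := fun i =>
    (((hGm i).ennreal_toReal.mul (hFm _).ennreal_toReal).div (hFm _).ennreal_toReal)
  have hofRealL : ∀ i z, ENNReal.ofReal (L i z) ≤ W i z := by
    intro i z
    rcases eq_or_ne (F ((i : ℕ) + 1) z) 0 with h | h
    · rw [hL]; simp only []
      rw [h]; simp
    · rcases eq_or_ne (F ((i : ℕ) + 1) z) ∞ with h' | h'
      · rw [hL]; simp only []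
        rw [h']; simp
      · rcases eq_or_ne (G i z) ∞ with hg | hg
        · rw [hL]; simp only []
          rw [hg]; simp
        · rcases eq_or_ne (F (i : ℕ) z) ∞ with hf | hf
          · rw [hL]; simp only []
            rw [hf]; simp
          · have : L i z = (W i z).toReal := by
              rw [hL, hW]; simp only []
              rw [ENNReal.toReal_div, ENNReal.toReal_mul]
            rw [this]
            exact ENNReal.ofReal_toReal_le
  have hLlint : ∀ i : Fin d, ∫⁻ z, ENNReal.ofReal (L i z) ∂pm ≤ ENNReal.ofReal B :=
    fun i => le_trans (lintegral_mono fun z => hofRealL i z) (hWlint i)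
  have hLint : ∀ i : Fin d, Integrable (L i) pm := by
    intro i
    refine ⟨(hLm i).aestronglyMeasurable, ?_⟩
    rw [hasFiniteIntegral_def]
    have h1 : ∀ z, ‖L i z‖ₑ = ENNReal.ofReal (L i z) :=
      fun z => Real.enorm_eq_ofReal (hLnn i z)
    simp_rw [h1]
    exact lt_of_le_of_lt (hLlint i) ENNReal.ofReal_lt_top
  have hLval : ∀ i : Fin d, ∫ z, L i z ∂pm ≤ B := by
    intro i
    rw [integral_eq_lintegral_of_nonneg_ae (ae_of_all _ (hLnn i))
      (hLm i).aestronglyMeasurable]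
    calc (∫⁻ z, ENNReal.ofReal (L i z) ∂pm).toReal
        ≤ (ENNReal.ofReal B).toReal :=
          ENNReal.toReal_mono ENNReal.ofReal_ne_top (hLlint i)
      _ = B := ENNReal.toReal_ofReal hBnn
  -- a.e. finiteness and positivity of marginals
  have hFfin : ∀ᵐ z ∂pm, ∀ k : ℕ, F k z ≠ ∞ := by
    rw [ae_all_iff]
    intro k
    have h := ae_lt_top (hFm k) (show ∫⁻ z, F k z ∂pm ≠ ∞ from by
      rw [hF]; simp only []
      rw [hpm, lmarg_lintegral_eq μ (S k) _ hΦm, ← hpm]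
      exact hlB_ne)
    filter_upwards [h] with z hz using hz.ne
  have hFnz : ∀ᵐ z ∂pm, ∀ k : ℕ, f z ≠ 0 → F k z ≠ 0 := by
    rw [ae_all_iff]
    intro k
    have h := lmarg_pos μ (S k) (fun w => ENNReal.ofReal (f w)) hΦm
    rw [← hpm] at h
    filter_upwards [h] with z hz hf0
    refine hz ?_
    simp only [ne_eq, ENNReal.ofReal_eq_zero, not_le]
    exact lt_of_le_of_ne (hnn z) (Ne.symm hf0)
  have hGfin : ∀ᵐ z ∂pm, ∀ i : Fin d, G i z ≠ ∞ := by
    rw [ae_all_iff]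
    intro i
    have h := ae_lt_top (hGm i) (show ∫⁻ z, G i z ∂pm ≠ ∞ from by
      rw [hG]; simp only []
      rw [hpm, lmarg_lintegral_eq μ {i} _ hΦm, ← hpm]
      exact hlB_ne)
    filter_upwards [h] with z hz using hz.ne
  have hGnz : ∀ᵐ z ∂pm, ∀ i : Fin d, f z ≠ 0 → G i z ≠ 0 := by
    rw [ae_all_iff]
    intro i
    have h := lmarg_pos μ {i} (fun w => ENNReal.ofReal (f w)) hΦm
    rw [← hpm] at h
    filter_upwards [h] with z hz hf0
    refine hz ?_
    simp only [ne_eq, ENNReal.ofReal_eq_zero, not_le]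
    exact lt_of_le_of_ne (hnn z) (Ne.symm hf0)
  -- the master pointwise inequality
  have master : ∀ᵐ z ∂pm, f z * Real.log (f z) - f z * Real.log B ≤
      ∑ i : Fin d, (f z * Real.log (f z) - f z * Real.log ((G i z).toReal) - f z + L i z) := by
    filter_upwards [hFfin, hFnz, hGfin, hGnz] with z h1 h2 h3 h4
    by_cases hf0 : f z = 0
    · have hsumL : ∑ i : Fin d,
          (f z * Real.log (f z) - f z * Real.log ((G i z).toReal) - f z + L i z)
          = ∑ i : Fin d, L i z :=
        Finset.sum_congr rfl (fun i _ => by rw [hf0]; ring)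
      rw [hsumL, hf0]
      have := Finset.sum_nonneg (fun i (_ : i ∈ (Finset.univ : Finset (Fin d))) => hLnn i z)
      linarith
    · have hfpos : 0 < f z := lt_of_le_of_ne (hnn z) (Ne.symm hf0)
      have hFto : ∀ k, 0 < (F k z).toReal := fun k => ENNReal.toReal_pos (h2 k hf0) (h1 k)
      have hGto : ∀ i, 0 < (G i z).toReal := fun i => ENNReal.toReal_pos (h4 i hf0) (h3 i)
      have step : ∀ i : Fin d,
          f z * (Real.log ((F (i:ℕ) z).toReal) - Real.log ((F ((i:ℕ)+1) z).toReal))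
            ≤ f z * Real.log (f z) - f z * Real.log ((G i z).toReal) - f z + L i z := by
        intro i
        have hg : 0 < (G i z).toReal := hGto i
        have ha : 0 < (F (i:ℕ) z).toReal := hFto _
        have hc : 0 < (F ((i:ℕ)+1) z).toReal := hFto _
        set g := (G i z).toReal
        set a := (F (i:ℕ) z).toReal
        set c := (F ((i:ℕ)+1) z).toReal
        have hY := young_ineq (f z / g) (Real.log a - Real.log c)
          (div_nonneg hfpos.le hg.le)
        have hexp : Real.exp (Real.log a - Real.log c) = a / c := by
          rw [Real.exp_sub, Real.exp_log ha, Real.exp_log hc]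
        have hlogu : Real.log (f z / g) = Real.log (f z) - Real.log g :=
          Real.log_div hf0 hg.ne'
        rw [hexp, hlogu] at hY
        have hmul := mul_le_mul_of_nonneg_left hY hg.le
        have e1 : g * (f z / g * (Real.log a - Real.log c))
            = f z * (Real.log a - Real.log c) := by
          field_simp
        have e2 : g * (f z / g * (Real.log (f z) - Real.log g) - f z / g + a / c)
            = f z * Real.log (f z) - f z * Real.log g - f z + g * a / c := by
          field_simp
        rw [e1, e2] at hmul
        have e3 : L i z = g * a / c := by simp only [hL]; rfl
        linarith [hmul, e3]
      have tel : ∑ i : Fin d, f z * (Real.log ((F (i:ℕ) z).toReal)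
          - Real.log ((F ((i:ℕ)+1) z).toReal))
          = f z * (Real.log ((F 0 z).toReal) - Real.log ((F d z).toReal)) := by
        rw [← Finset.mul_sum]
        congr 1
        rw [Fin.sum_univ_eq_sum_range (fun k => Real.log ((F k z).toReal)
          - Real.log ((F (k+1) z).toReal)) d]
        exact Finset.sum_range_sub' (fun k => Real.log ((F k z).toReal)) d
      have hF0 : (F 0 z).toReal = f z := by
        have hS0 : S 0 = ∅ := by ext j; simp [hS]
        rw [hF]; simp only []
        rw [hS0, lmarginal_empty]
        exact ENNReal.toReal_ofReal (hnn z)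
      have hFd : (F d z).toReal = B := by
        have hSd : S d = Finset.univ := by ext j; simp [hS, j.isLt]
        rw [hF]; simp only []
        rw [hSd]
        simp only [lmarginal_univ]
        rw [← hpm, hlB]
        exact ENNReal.toReal_ofReal hBnn
      calc f z * Real.log (f z) - f z * Real.log B
          = f z * (Real.log ((F 0 z).toReal) - Real.log ((F d z).toReal)) := by
            rw [hF0, hFd]; ring
        _ = ∑ i : Fin d, f z * (Real.log ((F (i:ℕ) z).toReal)
              - Real.log ((F ((i:ℕ)+1) z).toReal)) := tel.symm
        _ ≤ ∑ i : Fin d, (f z * Real.log (f z) - f z * Real.log ((G i z).toReal)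
              - f z + L i z) :=
            Finset.sum_le_sum (fun i _ => step i)
  -- integrate the master inequality
  have hterm_int : ∀ i : Fin d, Integrable (fun z =>
      f z * Real.log (f z) - f z * Real.log ((G i z).toReal) - f z + L i z) pm :=
    fun i => ((hint2.sub (hHfact i).1).sub hint).add (hLint i)
  have hleft : Integrable (fun z => f z * Real.log (f z) - f z * Real.log B) pm :=
    hint2.sub (hint.mul_const _)
  have hright : Integrable (fun z => ∑ i : Fin d,
      (f z * Real.log (f z) - f z * Real.log ((G i z).toReal) - f z + L i z)) pm :=
    integrable_finset_sum _ (fun i _ => hterm_int i)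
  have hmain := integral_mono_ae hleft hright master
  rw [integral_sub hint2 (hint.mul_const _), ← hA, integral_mul_const, ← hB,
    integral_finset_sum _ (fun i _ => hterm_int i)] at hmain
  have hterm : ∀ i : Fin d, ∫ z, (f z * Real.log (f z)
      - f z * Real.log ((G i z).toReal) - f z + L i z) ∂pm ≤ E i := by
    intro i
    have hI1 : Integrable (fun z => f z * Real.log (f z)
        - f z * Real.log ((G i z).toReal)) pm := hint2.sub (hHfact i).1
    have hI2 : Integrable (fun z => f z * Real.log (f z)
        - f z * Real.log ((G i z).toReal) - f z) pm := hI1.sub hint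
    rw [integral_add hI2 (hLint i), integral_sub hI1 hint,
      integral_sub hint2 (hHfact i).1, (hHfact i).2, ← hA, ← hB]
    linarith [hLval i]
  have hsum : ∑ i : Fin d, E i = ∫ z, (∑ i, Ent i z) ∂pm :=
    (integral_finset_sum _ (fun i _ => hEntint i)).symm
  show A - B * Real.log B ≤ ∫ z, (∑ i, Ent i z) ∂pm
  exact le_trans hmain (le_trans (Finset.sum_le_sum fun i _ => hterm i) (le_of_eq hsum))
end
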